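/- Let Z₂ be the perturbed Ziegler arrangement consisting of the 8 lines in ℝ² defined by y = 0, 2x + 2y + 1 = 0, 3x + y + 1 = 0, 8x − y + 4 = 0, 9x + 3y − 1 = 0, 21x − 4y + 7 = 0, 19x + 4y + 1 = 0, 10x + 10y − 5 = 0. Then: (a) every polynomial vector field (P,Q) with deg P ≤ 5 and deg Q ≤ 5 fixing every line of Z₂ is the zero vector field; and (b) there exists a nonzero polynomial vector field (P,Q) with max(deg P, deg Q) = 6 fixing every line of Z₂. -/

import Mathlib

open MvPolynomial

/-- Evaluation of a bivariate polynomial at a point of `ℝ × ℝ`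
(the variable `X 0` is `x`, the variable `X 1` is `y`). -/
noncomputable def pev (P : MvPolynomial (Fin 2) ℝ) (q : ℝ × ℝ) : ℝ :=
  MvPolynomial.eval ![q.1, q.2] P

/-- The line `{(x, y) | a * x + b * y + c = 0}`. -/
def lineSet (a b c : ℝ) : Set (ℝ × ℝ) := {q : ℝ × ℝ | a * q.1 + b * q.2 + c = 0}

/-- A subset of `ℝ²` is a line if it is the zero set of an affine form
`a * x + b * y + c` with `(a, b) ≠ (0, 0)`. -/
def IsLine (L : Set (ℝ × ℝ)) : Prop :=
  ∃ a b c : ℝ, (a, b) ≠ (0, 0) ∧ L = lineSet a b c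

/-- The line `L` is invariant by the polynomial vector field `χ = P ∂x + Q ∂y`:
for a defining affine form `a * x + b * y + c` of `L`, the polynomial
`a * P + b * Q` vanishes at every point of `L`. -/
def InvLine (P Q : MvPolynomial (Fin 2) ℝ) (L : Set (ℝ × ℝ)) : Prop :=
  ∃ a b c : ℝ, (a, b) ≠ (0, 0) ∧ L = lineSet a b c ∧
    ∀ q ∈ L, a * pev P q + b * pev Q q = 0

open scoped Classical in
/-- The Ziegler arrangement `Z₁`. -/
noncomputable def Ziegler1 : Finset (Set (ℝ × ℝ)) :=
  {lineSet 0 1 0, lineSet 2 2 1, lineSet 3 1 1, lineSet 8 (-1) 4,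
   lineSet 9 3 (-1), lineSet 9 (-2) 3, lineSet 11 2 1, lineSet 5 5 (-2)}

open scoped Classical in
/-- The perturbed Ziegler arrangement `Z₂`. -/
noncomputable def Ziegler2 : Finset (Set (ℝ × ℝ)) :=
  {lineSet 0 1 0, lineSet 2 2 1, lineSet 3 1 1, lineSet 8 (-1) 4,
   lineSet 9 3 (-1), lineSet 21 (-4) 7, lineSet 19 4 1, lineSet 10 10 (-5)}

lemma fin2_decomp (d : Fin 2 →₀ ℕ) :
    d = Finsupp.single 0 (d 0) + Finsupp.single 1 (d 1) := by
  ext i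
  fin_cases i <;> simp [Finsupp.single_apply]

lemma fin2_sum (d : Fin 2 →₀ ℕ) : (d.sum fun _ e => e) = d 0 + d 1 := by
  rw [Finsupp.sum_fintype]
  · exact Fin.sum_univ_two _
  · intro i; rfl

lemma mem_ne_zero {a b : ℝ} (h : (a, b) ≠ ((0:ℝ), (0:ℝ))) : a ≠ 0 ∨ b ≠ 0 := by
  by_contra hc
  push_neg at hc
  exact h (by simp [hc.1, hc.2])

lemma lineSet_scale {a b c a' b' c' : ℝ} (hab : (a, b) ≠ ((0:ℝ),(0:ℝ)))
    (hab' : (a', b') ≠ ((0:ℝ),(0:ℝ))) (h : lineSet a b c = lineSet a' b' c') :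
    ∃ t : ℝ, t ≠ 0 ∧ a' = t * a ∧ b' = t * b ∧ c' = t * c := by
  have hx : ∀ x y : ℝ, a * x + b * y + c = 0 → a' * x + b' * y + c' = 0 := by
    intro x y hxy
    have : (x, y) ∈ lineSet a b c := hxy
    rw [h] at this
    exact this
  rcases mem_ne_zero hab with ha | hb
  · by_cases hb0 : b = 0
    · -- vertical line x = -c/a
      have h1 := hx (-c/a) 0 (by field_simp [hb0]; ring)
      have h2 := hx (-c/a) 1 (by field_simp [hb0]; ring_nf; exact hb0)
      have hb' : b' = 0 := by linarith
      refine ⟨a'/a, ?_, by field_simp, by rw [hb0, hb']; ring, ?_⟩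
      · intro h0
        have ha0 : a' = 0 := by field_simp at h0; simpa using h0
        exact hab' (by simp [ha0, hb' ])
      · have : a' * (-c/a) + c' = 0 := by linarith
        field_simp at this ⊢
        linarith
    · -- b ≠ 0 case below handles
      have h1 := hx 0 (-c/b) (by field_simp; ring)
      have h2 := hx 1 ((-a-c)/b) (by field_simp; ring)
      have hb'' : b' = (b'/b) * b := by field_simp
      have ha'' : a' = (b'/b) * a := by
        field_simp
        field_simp at h1 h2
        nlinarith [h1, h2]
      have hc'' : c' = (b'/b) * c := by
        field_simp
        field_simp at h1
        nlinarith [h1]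
      refine ⟨b'/b, ?_, ha'', hb'', hc''⟩
      intro h0
      rw [h0] at ha'' hb''
      exact hab' (by simp [ha'', hb''])
  · have h1 := hx 0 (-c/b) (by field_simp; ring)
    have h2 := hx 1 ((-a-c)/b) (by field_simp; ring)
    have hb'' : b' = (b'/b) * b := by field_simp
    have ha'' : a' = (b'/b) * a := by
      field_simp
      field_simp at h1 h2
      nlinarith [h1, h2]
    have hc'' : c' = (b'/b) * c := by
      field_simp
      field_simp at h1
      nlinarith [h1]
    refine ⟨b'/b, ?_, ha'', hb'', hc''⟩
    intro h0
    rw [h0] at ha'' hb''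
    exact hab' (by simp [ha'', hb''])

lemma invLine_pt {P Q : MvPolynomial (Fin 2) ℝ} {a b c : ℝ}
    (hab : (a, b) ≠ ((0:ℝ),(0:ℝ))) (h : InvLine P Q (lineSet a b c)) :
    ∀ x y : ℝ, a * x + b * y + c = 0 →
      a * pev P (x, y) + b * pev Q (x, y) = 0 := by
  obtain ⟨a', b', c', hab', hL, hv⟩ := h
  obtain ⟨t, ht, ha, hb, hc⟩ := lineSet_scale hab hab' hL
  intro x y hxy
  have hq : (x, y) ∈ lineSet a b c := hxy
  have hv' := hv (x, y) hq
  rw [ha, hb] at hv'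
  have h2 : t * (a * pev P (x, y) + b * pev Q (x, y)) = 0 := by ring_nf; ring_nf at hv'; linarith
  rcases mul_eq_zero.mp h2 with h | h
  · exact absurd h ht
  · exact h

lemma expand5 (P : MvPolynomial (Fin 2) ℝ) (h : P.totalDegree ≤ 5) (x y : ℝ) :
    pev P (x, y) = ∑ i ∈ Finset.range 6, ∑ j ∈ Finset.range 6,
      MvPolynomial.coeff (Finsupp.single 0 i + Finsupp.single 1 j) P * (x ^ i * y ^ j) := by
  classical
  have key : pev P (x, y)
      = ∑ d ∈ P.support, MvPolynomial.coeff d P * (x ^ d 0 * y ^ d 1) := by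
    show MvPolynomial.eval ![x, y] P = _
    rw [eval_eq']
    refine Finset.sum_congr rfl fun d _ => ?_
    rw [Fin.prod_univ_two]
    simp
  set φ : ℕ × ℕ → (Fin 2 →₀ ℕ) :=
    (fun ij : ℕ × ℕ => Finsupp.single (0 : Fin 2) ij.1 + Finsupp.single 1 ij.2) with hφ
  set T : Finset (ℕ × ℕ) := Finset.range 6 ×ˢ Finset.range 6 with hT
  have hφ0 : ∀ ij : ℕ × ℕ, φ ij 0 = ij.1 := by
    intro ij; simp [hφ, Finsupp.single_apply]
  have hφ1 : ∀ ij : ℕ × ℕ, φ ij 1 = ij.2 := by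
    intro ij; simp [hφ, Finsupp.single_apply]
  have hinj : ∀ p ∈ T, ∀ q ∈ T, φ p = φ q → p = q := by
    intro p _ q _ hpq
    have h0 : φ p 0 = φ q 0 := by rw [hpq]
    have h1 : φ p 1 = φ q 1 := by rw [hpq]
    rw [hφ0, hφ0] at h0
    rw [hφ1, hφ1] at h1
    exact Prod.ext h0 h1
  have hsub : P.support ⊆ T.image φ := by
    intro d hd
    have hsum := MvPolynomial.le_totalDegree hd
    rw [fin2_sum] at hsum
    have h5 : d 0 + d 1 ≤ 5 := le_trans hsum h
    refine Finset.mem_image.mpr ⟨(d 0, d 1), ?_, ?_⟩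
    · simp only [hT, Finset.mem_product, Finset.mem_range]
      omega
    · exact (fin2_decomp d).symm
  rw [key, Finset.sum_subset hsub (by
    intro d _ hd
    rw [MvPolynomial.notMem_support_iff.mp hd, zero_mul]),
    Finset.sum_image hinj, hT, Finset.sum_product]
  refine Finset.sum_congr rfl fun i _ => Finset.sum_congr rfl fun j _ => ?_
  rw [hφ0 (i, j), hφ1 (i, j)]

lemma eq_zero_of_coeffs (P : MvPolynomial (Fin 2) ℝ) (h5 : P.totalDegree ≤ 5)
    (hc : ∀ i j : ℕ, i ≤ 5 → j ≤ 5 →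
      MvPolynomial.coeff (Finsupp.single 0 i + Finsupp.single 1 j) P = 0) : P = 0 := by
  ext d
  rw [MvPolynomial.coeff_zero]
  by_cases h0 : d 0 ≤ 5 ∧ d 1 ≤ 5
  · rw [fin2_decomp d]
    exact hc _ _ h0.1 h0.2
  · apply MvPolynomial.coeff_eq_zero_of_totalDegree_lt
    have : (∑ i ∈ d.support, d i) = d 0 + d 1 := fin2_sum d
    rw [this]
    omega

lemma term_deg_le (k : ℝ) (i j n : ℕ) (h : i + j ≤ n) :
    (MvPolynomial.C k * X 0 ^ i * X 1 ^ j : MvPolynomial (Fin 2) ℝ).totalDegree ≤ n := by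
  refine le_trans (MvPolynomial.totalDegree_mul _ _) ?_
  have h1 := MvPolynomial.totalDegree_mul (MvPolynomial.C k) (X 0 ^ i : MvPolynomial (Fin 2) ℝ)
  rw [MvPolynomial.totalDegree_C, MvPolynomial.totalDegree_X_pow] at h1
  rw [MvPolynomial.totalDegree_X_pow]
  omega

lemma coeff_high (P : MvPolynomial (Fin 2) ℝ) (h5 : P.totalDegree ≤ 5) (i j : ℕ)
    (hij : 5 < i + j) :
    MvPolynomial.coeff (Finsupp.single 0 i + Finsupp.single 1 j) P = 0 := by
  apply MvPolynomial.coeff_eq_zero_of_totalDegree_lt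
  have h2 : ((Finsupp.single (0 : Fin 2) i + Finsupp.single 1 j).sum fun _ e => e) = i + j := by
    rw [fin2_sum]
    simp [Finsupp.single_apply]
  have h3 : (∑ k ∈ (Finsupp.single (0 : Fin 2) i + Finsupp.single 1 j).support,
      ((Finsupp.single (0 : Fin 2) i + Finsupp.single 1 j : Fin 2 →₀ ℕ)) k) = i + j := h2
  rw [h3]
  omega

noncomputable def Pb : MvPolynomial (Fin 2) ℝ :=
    MvPolynomial.C (1255454704 : ℝ) * X 0 ^ 0 * X 1 ^ 0 +
    MvPolynomial.C (24686588787 : ℝ) * X 0 ^ 0 * X 1 ^ 1 +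
    MvPolynomial.C (-18960117135 : ℝ) * X 0 ^ 0 * X 1 ^ 2 +
    MvPolynomial.C (-83997289648 : ℝ) * X 0 ^ 0 * X 1 ^ 3 +
    MvPolynomial.C (67332740006 : ℝ) * X 0 ^ 0 * X 1 ^ 4 +
    MvPolynomial.C (-2112291956 : ℝ) * X 0 ^ 0 * X 1 ^ 5 +
    MvPolynomial.C (9960451008 : ℝ) * X 0 ^ 0 * X 1 ^ 6 +
    MvPolynomial.C (19136473720 : ℝ) * X 0 ^ 1 * X 1 ^ 0 +
    MvPolynomial.C (46487316651 : ℝ) * X 0 ^ 1 * X 1 ^ 1 +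
    MvPolynomial.C (-104185057576 : ℝ) * X 0 ^ 1 * X 1 ^ 2 +
    MvPolynomial.C (93495737556 : ℝ) * X 0 ^ 1 * X 1 ^ 3 +
    MvPolynomial.C (-50413489278 : ℝ) * X 0 ^ 1 * X 1 ^ 4 +
    MvPolynomial.C (84704556636 : ℝ) * X 0 ^ 1 * X 1 ^ 5 +
    MvPolynomial.C (-145438618696 : ℝ) * X 0 ^ 2 * X 1 ^ 0 +
    MvPolynomial.C (-113405298315 : ℝ) * X 0 ^ 2 * X 1 ^ 1 +
    MvPolynomial.C (1532641460857 : ℝ) * X 0 ^ 2 * X 1 ^ 2 +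
    MvPolynomial.C (1033803836892 : ℝ) * X 0 ^ 2 * X 1 ^ 3 +
    MvPolynomial.C (-502985520108 : ℝ) * X 0 ^ 2 * X 1 ^ 4 +
    MvPolynomial.C (-1117588480120 : ℝ) * X 0 ^ 3 * X 1 ^ 0 +
    MvPolynomial.C (2330735697237 : ℝ) * X 0 ^ 3 * X 1 ^ 1 +
    MvPolynomial.C (7733566018282 : ℝ) * X 0 ^ 3 * X 1 ^ 2 +
    MvPolynomial.C (205906612272 : ℝ) * X 0 ^ 3 * X 1 ^ 3 +
    MvPolynomial.C (-882716397864 : ℝ) * X 0 ^ 4 * X 1 ^ 0 +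
    MvPolynomial.C (11621184502428 : ℝ) * X 0 ^ 4 * X 1 ^ 1 +
    MvPolynomial.C (8194014578628 : ℝ) * X 0 ^ 4 * X 1 ^ 2 +
    MvPolynomial.C (4164170340960 : ℝ) * X 0 ^ 5 * X 1 ^ 0 +
    MvPolynomial.C (13058357604156 : ℝ) * X 0 ^ 5 * X 1 ^ 1 +
    MvPolynomial.C (5777534389536 : ℝ) * X 0 ^ 6 * X 1 ^ 0

noncomputable def Qb : MvPolynomial (Fin 2) ℝ :=
    MvPolynomial.C (-99357104168 : ℝ) * X 0 ^ 0 * X 1 ^ 1 +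
    MvPolynomial.C (61479556996 : ℝ) * X 0 ^ 0 * X 1 ^ 2 +
    MvPolynomial.C (393013812383 : ℝ) * X 0 ^ 0 * X 1 ^ 3 +
    MvPolynomial.C (-289956194665 : ℝ) * X 0 ^ 0 * X 1 ^ 4 +
    MvPolynomial.C (-39225552888 : ℝ) * X 0 ^ 0 * X 1 ^ 5 +
    MvPolynomial.C (119873228796 : ℝ) * X 0 ^ 0 * X 1 ^ 6 +
    MvPolynomial.C (-452336830400 : ℝ) * X 0 ^ 1 * X 1 ^ 1 +
    MvPolynomial.C (600327217638 : ℝ) * X 0 ^ 1 * X 1 ^ 2 +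
    MvPolynomial.C (1138694520161 : ℝ) * X 0 ^ 1 * X 1 ^ 3 +
    MvPolynomial.C (66442072014 : ℝ) * X 0 ^ 1 * X 1 ^ 4 +
    MvPolynomial.C (57775512312 : ℝ) * X 0 ^ 1 * X 1 ^ 5 +
    MvPolynomial.C (-564215385048 : ℝ) * X 0 ^ 2 * X 1 ^ 1 +
    MvPolynomial.C (2152832078160 : ℝ) * X 0 ^ 2 * X 1 ^ 2 +
    MvPolynomial.C (2415110683620 : ℝ) * X 0 ^ 2 * X 1 ^ 3 +
    MvPolynomial.C (-191652842484 : ℝ) * X 0 ^ 2 * X 1 ^ 4 +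
    MvPolynomial.C (3114996236118 : ℝ) * X 0 ^ 3 * X 1 ^ 2

lemma Pb_ev (x y : ℝ) : pev Pb (x, y) = (1255454704 : ℝ) + (24686588787 : ℝ) * y ^ 1 + (-18960117135 : ℝ) * y ^ 2 + (-83997289648 : ℝ) * y ^ 3 + (67332740006 : ℝ) * y ^ 4 + (-2112291956 : ℝ) * y ^ 5 + (9960451008 : ℝ) * y ^ 6 + (19136473720 : ℝ) * x ^ 1 + (46487316651 : ℝ) * x ^ 1 * y ^ 1 + (-104185057576 : ℝ) * x ^ 1 * y ^ 2 + (93495737556 : ℝ) * x ^ 1 * y ^ 3 + (-50413489278 : ℝ) * x ^ 1 * y ^ 4 + (84704556636 : ℝ) * x ^ 1 * y ^ 5 + (-145438618696 : ℝ) * x ^ 2 + (-113405298315 : ℝ) * x ^ 2 * y ^ 1 + (1532641460857 : ℝ) * x ^ 2 * y ^ 2 + (1033803836892 : ℝ) * x ^ 2 * y ^ 3 + (-502985520108 : ℝ) * x ^ 2 * y ^ 4 + (-1117588480120 : ℝ) * x ^ 3 + (2330735697237 : ℝ) * x ^ 3 * y ^ 1 + (7733566018282 : ℝ) * x ^ 3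 * y ^ 2 + (205906612272 : ℝ) * x ^ 3 * y ^ 3 + (-882716397864 : ℝ) * x ^ 4 + (11621184502428 : ℝ) * x ^ 4 * y ^ 1 + (8194014578628 : ℝ) * x ^ 4 * y ^ 2 + (4164170340960 : ℝ) * x ^ 5 + (13058357604156 : ℝ) * x ^ 5 * y ^ 1 + (5777534389536 : ℝ) * x ^ 6 := by
  show MvPolynomial.eval ![x, y] Pb = _
  simp only [Pb, map_add, map_mul, map_pow, eval_C, eval_X,
    Matrix.cons_val_zero, Matrix.cons_val_one, Matrix.head_cons]
  ring

lemma Qb_ev (x y : ℝ) : pev Qb (x, y) = (-99357104168 : ℝ) * y ^ 1 + (61479556996 : ℝ) * y ^ 2 + (393013812383 : ℝ) * y ^ 3 + (-289956194665 : ℝ) * y ^ 4 + (-39225552888 : ℝ) * y ^ 5 + (119873228796 : ℝ) * y ^ 6 + (-452336830400 : ℝ) * x ^ 1 * y ^ 1 + (600327217638 : ℝ) * x ^ 1 * y ^ 2 + (1138694520161 : ℝ) * x ^ 1 * y ^ 3 + (66442072014 : ℝ) * x ^ 1 * y ^ 4 + (57775512312 : ℝ) * x ^ 1 * y ^ 5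 + (-564215385048 : ℝ) * x ^ 2 * y ^ 1 + (2152832078160 : ℝ) * x ^ 2 * y ^ 2 + (2415110683620 : ℝ) * x ^ 2 * y ^ 3 + (-191652842484 : ℝ) * x ^ 2 * y ^ 4 + (3114996236118 : ℝ) * x ^ 3 * y ^ 2 := by
  show MvPolynomial.eval ![x, y] Qb = _
  simp only [Qb, map_add, map_mul, map_pow, eval_C, eval_X,
    Matrix.cons_val_zero, Matrix.cons_val_one, Matrix.head_cons]
  ring

lemma Pb_deg : Pb.totalDegree ≤ 6 := by
  unfold Pb
  refine le_trans (MvPolynomial.totalDegree_add _ _) (max_le ?_ (term_deg_le _ _ _ _ (by norm_num)))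
  refine le_trans (MvPolynomial.totalDegree_add _ _) (max_le ?_ (term_deg_le _ _ _ _ (by norm_num)))
  refine le_trans (MvPolynomial.totalDegree_add _ _) (max_le ?_ (term_deg_le _ _ _ _ (by norm_num)))
  refine le_trans (MvPolynomial.totalDegree_add _ _) (max_le ?_ (term_deg_le _ _ _ _ (by norm_num)))
  refine le_trans (MvPolynomial.totalDegree_add _ _) (max_le ?_ (term_deg_le _ _ _ _ (by norm_num)))
  refine le_trans (MvPolynomial.totalDegree_add _ _) (max_le ?_ (term_deg_le _ _ _ _ (by norm_num)))
  refine le_trans (MvPolynomial.totalDegree_add _ _) (max_le ?_ (term_deg_le _ _ _ _ (by norm_num)))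
  refine le_trans (MvPolynomial.totalDegree_add _ _) (max_le ?_ (term_deg_le _ _ _ _ (by norm_num)))
  refine le_trans (MvPolynomial.totalDegree_add _ _) (max_le ?_ (term_deg_le _ _ _ _ (by norm_num)))
  refine le_trans (MvPolynomial.totalDegree_add _ _) (max_le ?_ (term_deg_le _ _ _ _ (by norm_num)))
  refine le_trans (MvPolynomial.totalDegree_add _ _) (max_le ?_ (term_deg_le _ _ _ _ (by norm_num)))
  refine le_trans (MvPolynomial.totalDegree_add _ _) (max_le ?_ (term_deg_le _ _ _ _ (by norm_num)))
  refine le_trans (MvPolynomial.totalDegree_add _ _) (max_le ?_ (term_deg_le _ _ _ _ (by norm_num)))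
  refine le_trans (MvPolynomial.totalDegree_add _ _) (max_le ?_ (term_deg_le _ _ _ _ (by norm_num)))
  refine le_trans (MvPolynomial.totalDegree_add _ _) (max_le ?_ (term_deg_le _ _ _ _ (by norm_num)))
  refine le_trans (MvPolynomial.totalDegree_add _ _) (max_le ?_ (term_deg_le _ _ _ _ (by norm_num)))
  refine le_trans (MvPolynomial.totalDegree_add _ _) (max_le ?_ (term_deg_le _ _ _ _ (by norm_num)))
  refine le_trans (MvPolynomial.totalDegree_add _ _) (max_le ?_ (term_deg_le _ _ _ _ (by norm_num)))
  refine le_trans (MvPolynomial.totalDegree_add _ _) (max_le ?_ (term_deg_le _ _ _ _ (by norm_num)))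
  refine le_trans (MvPolynomial.totalDegree_add _ _) (max_le ?_ (term_deg_le _ _ _ _ (by norm_num)))
  refine le_trans (MvPolynomial.totalDegree_add _ _) (max_le ?_ (term_deg_le _ _ _ _ (by norm_num)))
  refine le_trans (MvPolynomial.totalDegree_add _ _) (max_le ?_ (term_deg_le _ _ _ _ (by norm_num)))
  refine le_trans (MvPolynomial.totalDegree_add _ _) (max_le ?_ (term_deg_le _ _ _ _ (by norm_num)))
  refine le_trans (MvPolynomial.totalDegree_add _ _) (max_le ?_ (term_deg_le _ _ _ _ (by norm_num)))
  refine le_trans (MvPolynomial.totalDegree_add _ _) (max_le ?_ (term_deg_le _ _ _ _ (by norm_num)))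
  refine le_trans (MvPolynomial.totalDegree_add _ _) (max_le ?_ (term_deg_le _ _ _ _ (by norm_num)))
  refine le_trans (MvPolynomial.totalDegree_add _ _) (max_le ?_ (term_deg_le _ _ _ _ (by norm_num)))
  exact term_deg_le _ _ _ _ (by norm_num)

lemma Qb_deg : Qb.totalDegree ≤ 6 := by
  unfold Qb
  refine le_trans (MvPolynomial.totalDegree_add _ _) (max_le ?_ (term_deg_le _ _ _ _ (by norm_num)))
  refine le_trans (MvPolynomial.totalDegree_add _ _) (max_le ?_ (term_deg_le _ _ _ _ (by norm_num)))
  refine le_trans (MvPolynomial.totalDegree_add _ _) (max_le ?_ (term_deg_le _ _ _ _ (by norm_num)))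
  refine le_trans (MvPolynomial.totalDegree_add _ _) (max_le ?_ (term_deg_le _ _ _ _ (by norm_num)))
  refine le_trans (MvPolynomial.totalDegree_add _ _) (max_le ?_ (term_deg_le _ _ _ _ (by norm_num)))
  refine le_trans (MvPolynomial.totalDegree_add _ _) (max_le ?_ (term_deg_le _ _ _ _ (by norm_num)))
  refine le_trans (MvPolynomial.totalDegree_add _ _) (max_le ?_ (term_deg_le _ _ _ _ (by norm_num)))
  refine le_trans (MvPolynomial.totalDegree_add _ _) (max_le ?_ (term_deg_le _ _ _ _ (by norm_num)))
  refine le_trans (MvPolynomial.totalDegree_add _ _) (max_le ?_ (term_deg_le _ _ _ _ (by norm_num)))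
  refine le_trans (MvPolynomial.totalDegree_add _ _) (max_le ?_ (term_deg_le _ _ _ _ (by norm_num)))
  refine le_trans (MvPolynomial.totalDegree_add _ _) (max_le ?_ (term_deg_le _ _ _ _ (by norm_num)))
  refine le_trans (MvPolynomial.totalDegree_add _ _) (max_le ?_ (term_deg_le _ _ _ _ (by norm_num)))
  refine le_trans (MvPolynomial.totalDegree_add _ _) (max_le ?_ (term_deg_le _ _ _ _ (by norm_num)))
  refine le_trans (MvPolynomial.totalDegree_add _ _) (max_le ?_ (term_deg_le _ _ _ _ (by norm_num)))
  refine le_trans (MvPolynomial.totalDegree_add _ _) (max_le ?_ (term_deg_le _ _ _ _ (by norm_num)))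
  exact term_deg_le _ _ _ _ (by norm_num)

set_option maxHeartbeats 1000000 in
lemma Pb_not5 : ¬ Pb.totalDegree ≤ 5 := by
  intro h
  have e0 := expand5 Pb h 0 0
  have e1 := expand5 Pb h 1 0
  have e2 := expand5 Pb h 2 0
  have e3 := expand5 Pb h 3 0
  have e4 := expand5 Pb h 4 0
  have e5 := expand5 Pb h 5 0
  have e6 := expand5 Pb h 6 0
  rw [Pb_ev] at e0 e1 e2 e3 e4 e5 e6
  simp only [Finset.sum_range_succ, Finset.sum_range_zero, zero_add] at e0 e1 e2 e3 e4 e5 e6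
  have hcontra : (1 : ℝ) = 0 := by linear_combination ((1 : ℝ)/4159824760465920) * e0 + ((-1 : ℝ)/693304126744320) * e1 + ((1 : ℝ)/277321650697728) * e2 + ((-1 : ℝ)/207991238023296) * e3 + ((1 : ℝ)/277321650697728) * e4 + ((-1 : ℝ)/693304126744320) * e5 + ((1 : ℝ)/4159824760465920) * e6
  exact absurd hcontra (by norm_num)

set_option maxHeartbeats 1000000 in
lemma inv1 : InvLine Pb Qb (lineSet (0) (1) (0)) := by
  refine ⟨0, 1, 0, by norm_num, rfl, ?_⟩
  rintro ⟨x, y⟩ hq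
  have hxy : (0 : ℝ) * x + (1 : ℝ) * y + (0 : ℝ) = 0 := hq
  rw [Pb_ev x y, Qb_ev x y]
  linear_combination ((-99357104168 : ℝ) + (61479556996 : ℝ) * y ^ 1 + (393013812383 : ℝ) * y ^ 2 + (-289956194665 : ℝ) * y ^ 3 + (-39225552888 : ℝ) * y ^ 4 + (119873228796 : ℝ) * y ^ 5 + (-452336830400 : ℝ) * x ^ 1 + (600327217638 : ℝ) * x ^ 1 * y ^ 1 + (1138694520161 : ℝ) * x ^ 1 * y ^ 2 + (66442072014 : ℝ) * x ^ 1 * y ^ 3 + (57775512312 : ℝ) * x ^ 1 * y ^ 4 + (-564215385048 : ℝ) * x ^ 2 + (2152832078160 : ℝ) * x ^ 2 * y ^ 1 + (2415110683620 : ℝ) * x ^ 2 * y ^ 2 + (-191652842484 : ℝ) * x ^ 2 * y ^ 3 + (3114996236118 : ℝ) * x ^ 3 * y ^ 1) * hxy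

set_option maxHeartbeats 1000000 in
lemma inv2 : InvLine Pb Qb (lineSet (2) (2) (1)) := by
  refine ⟨2, 2, 1, by norm_num, rfl, ?_⟩
  rintro ⟨x, y⟩ hq
  have hxy : (2 : ℝ) * x + (2 : ℝ) * y + (1 : ℝ) = 0 := hq
  rw [Pb_ev x y, Qb_ev x y]
  linear_combination ((2510909408 : ℝ) + (-154362849578 : ℝ) * y ^ 1 + (393764578878 : ℝ) * y ^ 2 + (-169496112286 : ℝ) * y ^ 3 + (-106254684746 : ℝ) * y ^ 4 + (129833679804 : ℝ) * y ^ 5 + (33251128624 : ℝ) * x ^ 1 + (-569475585590 : ℝ) * x ^ 1 * y ^ 1 + (1343706333548 : ℝ) * x ^ 1 * y ^ 2 + (115960072910 : ℝ) * x ^ 1 * y ^ 3 + (12646389144 : ℝ) * x ^ 1 * y ^ 4 + (-357379494640 : ℝ) * x ^ 2 + (498468793734 : ℝ) * x ^ 2 * y ^ 1 + (3686596823470 : ℝ) * x ^ 2 * y ^ 2 + (-707284751736 : ℝ) * x ^ 2 * y ^ 3 + (-1520417970960 : ℝ) * x ^ 3 + (6705369748926 : ℝ) * x ^ 3 * y ^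 1 + (913191364008 : ℝ) * x ^ 3 * y ^ 2 + (1275403146192 : ℝ) * x ^ 4 + (7280823214620 : ℝ) * x ^ 4 * y ^ 1 + (5777534389536 : ℝ) * x ^ 5) * hxy

set_option maxHeartbeats 1000000 in
lemma inv3 : InvLine Pb Qb (lineSet (3) (1) (1)) := by
  refine ⟨3, 1, 1, by norm_num, rfl, ?_⟩
  rintro ⟨x, y⟩ hq
  have hxy : (3 : ℝ) * x + (1 : ℝ) * y + (1 : ℝ) = 0 := hq
  rw [Pb_ev x y, Qb_ev x y]
  linear_combination ((3766364112 : ℝ) + (-29063701919 : ℝ) * y ^ 1 + (33662907510 : ℝ) * y ^ 2 + (107359035929 : ℝ) * y ^ 3 + (-195317010576 : ℝ) * y ^ 4 + (149754581820 : ℝ) * y ^ 5 + (46110328824 : ℝ) * x ^ 1 + (-271794103514 : ℝ) * x ^ 1 * y ^ 1 + (458577425894 : ℝ) * x ^ 1 * y ^ 2 + (638527199148 : ℝ) * x ^ 1 * y ^ 3 + (-137374563240 : ℝ) * x ^ 1 * y ^ 4 + (-574646842560 : ℝ) * x ^ 2 + (485597873109 : ℝ) * x ^ 2 * y ^ 1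 + (4889426309940 : ℝ) * x ^ 2 * y ^ 2 + (-1288485713088 : ℝ) * x ^ 2 * y ^ 3 + (-1628824912680 : ℝ) * x ^ 3 + (7164238385064 : ℝ) * x ^ 3 * y ^ 1 + (4483176976080 : ℝ) * x ^ 3 * y ^ 2 + (2238325544448 : ℝ) * x ^ 4 + (11132512807644 : ℝ) * x ^ 4 * y ^ 1 + (5777534389536 : ℝ) * x ^ 5) * hxy

set_option maxHeartbeats 1000000 in
lemma inv4 : InvLine Pb Qb (lineSet (8) (-1) (4)) := by
  refine ⟨8, -1, 4, by norm_num, rfl, ?_⟩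
  rintro ⟨x, y⟩ hq
  have hxy : (8 : ℝ) * x + (-1 : ℝ) * y + (4 : ℝ) = 0 := hq
  rw [Pb_ev x y, Qb_ev x y]
  linear_combination ((2510909408 : ℝ) + (74840180968 : ℝ) * y ^ 1 + (-34580078277 : ℝ) * y ^ 2 + (-274893051961 : ℝ) * y ^ 3 + (138431265688 : ℝ) * y ^ 4 + (40189620732 : ℝ) * y ^ 5 + (33251128624 : ℝ) * x ^ 1 + (64691261122 : ℝ) * x ^ 1 * y ^ 1 + (-273118947727 : ℝ) * x ^ 1 * y ^ 2 + (383824212062 : ℝ) * x ^ 1 * y ^ 3 + (-298343974920 : ℝ) * x ^ 1 * y ^ 4 + (-357379494640 : ℝ) * x ^ 2 + (-304484146272 : ℝ) * x ^ 2 * y ^ 1 + (2997191761060 : ℝ) * x ^ 2 * y ^ 2 + (1445479519020 : ℝ) * x ^ 2 * y ^ 3 + (-1520417970960 : ℝ) * x ^ 3 + (4890335194278 : ℝ) * x ^ 3 * y ^ 1 + (9916583253984 : ℝ) * x ^ 3 * y ^ 2 + (1275403146192 : ℝ) * x ^ 4 + (13780549402848 : ℝ) * x ^ 4 * y ^ 1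 + (5777534389536 : ℝ) * x ^ 5) * hxy

set_option maxHeartbeats 1000000 in
lemma inv5 : InvLine Pb Qb (lineSet (9) (3) (-1)) := by
  refine ⟨9, 3, -1, by norm_num, rfl, ?_⟩
  rintro ⟨x, y⟩ hq
  have hxy : (9 : ℝ) * x + (3 : ℝ) * y + (-1 : ℝ) = 0 := hq
  rw [Pb_ev x y, Qb_ev x y]
  linear_combination ((-11299092336 : ℝ) + (41994736413 : ℝ) * y ^ 1 + (112186592466 : ℝ) * y ^ 2 + (-86506052919 : ℝ) * y ^ 3 + (4355765184 : ℝ) * y ^ 4 + (149754581820 : ℝ) * y ^ 5 + (-273920094504 : ℝ) * x ^ 1 + (494816985546 : ℝ) * x ^ 1 * y ^ 1 + (1630814154102 : ℝ) * x ^ 1 * y ^ 2 + (-143657212452 : ℝ) * x ^ 1 * y ^ 3 + (-137374563240 : ℝ) * x ^ 1 * y ^ 4 + (-1156333282272 : ℝ) * x ^ 2 + (3697646863077 : ℝ) * x ^ 2 * y ^ 1 + (5517998593956 : ℝ) * x ^ 2 * y ^ 2 + (-1288485713088 : ℝ) * x ^ 2 * y ^ 3 + (-348703219368 : ℝ) *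 x ^ 3 + (11256090834456 : ℝ) * x ^ 3 * y ^ 1 + (4483176976080 : ℝ) * x ^ 3 * y ^ 2 + (4806118606464 : ℝ) * x ^ 4 + (11132512807644 : ℝ) * x ^ 4 * y ^ 1 + (5777534389536 : ℝ) * x ^ 5) * hxy

set_option maxHeartbeats 1000000 in
lemma inv6 : InvLine Pb Qb (lineSet (21) (-4) (7)) := by
  refine ⟨21, -4, 7, by norm_num, rfl, ?_⟩
  rintro ⟨x, y⟩ hq
  have hxy : (21 : ℝ) * x + (-4 : ℝ) * y + (7 : ℝ) = 0 := hq
  rw [Pb_ev x y, Qb_ev x y]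
  linear_combination ((3766364112 : ℝ) + (132987462521 : ℝ) * y ^ 1 + (-16018691105 : ℝ) * y ^ 2 + (-485724728080 : ℝ) * y ^ 3 + (90130486638 : ℝ) * y ^ 4 + (67580861004 : ℝ) * y ^ 5 + (46110328824 : ℝ) * x ^ 1 + (25326510518 : ℝ) * x ^ 1 * y ^ 1 + (-593070932053 : ℝ) * x ^ 1 * y ^ 2 + (748081138500 : ℝ) * x ^ 1 * y ^ 3 + (-32123889756 : ℝ) * x ^ 1 * y ^ 4 + (-574646842560 : ℝ) * x ^ 2 + (-422156259363 : ℝ) * x ^ 2 * y ^ 1 + (4905715271574 : ℝ) * x ^ 2 * y ^ 2 + (2280370716864 : ℝ) * x ^ 2 * y ^ 3 + (-1628824912680 : ℝ) * x ^ 3 + (7327918776840 : ℝ) * x ^ 3 * y ^ 1 + (10890936549108 : ℝ) * x ^ 3 * y ^ 2 + (2238325544448 : ℝ) * x ^ 4 + (14158840345020 : ℝ) * x ^ 4 * y ^ 1 + (5777534389536 : ℝ) * x ^ 5) * hxy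

set_option maxHeartbeats 1000000 in
lemma inv7 : InvLine Pb Qb (lineSet (19) (4) (1)) := by
  refine ⟨19, 4, 1, by norm_num, rfl, ?_⟩
  rintro ⟨x, y⟩ hq
  have hxy : (19 : ℝ) * x + (4 : ℝ) * y + (1 : ℝ) = 0 := hq
  rw [Pb_ev x y, Qb_ev x y]
  linear_combination ((23853639376 : ℝ) + (-23797787223 : ℝ) * y ^ 1 + (-19132848689 : ℝ) * y ^ 2 + (52638140976 : ℝ) * y ^ 3 + (-91055282450 : ℝ) * y ^ 4 + (167185371084 : ℝ) * y ^ 5 + (-89626147464 : ℝ) * x ^ 1 + (-115425758138 : ℝ) * x ^ 1 * y ^ 1 + (1247019934251 : ℝ) * x ^ 1 * y ^ 2 + (342992678660 : ℝ) * x ^ 1 * y ^ 3 + (-334008356316 : ℝ) * x ^ 1 * y ^ 4 + (-1060436953408 : ℝ) * x ^ 2 + (2023275010077 : ℝ) * x ^ 2 * y ^ 1 + (5945037277846 : ℝ) * x ^ 2 * y ^ 2 + (-994294370496 : ℝ) * x ^ 2 * y ^ 3 + (-1085879007528 : ℝ) * x ^ 3 + (10185269086152 : ℝ) * x ^ 3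 * y ^ 1 + (5700954668148 : ℝ) * x ^ 3 * y ^ 2 + (3860089583616 : ℝ) * x ^ 4 + (11842034574780 : ℝ) * x ^ 4 * y ^ 1 + (5777534389536 : ℝ) * x ^ 5) * hxy

set_option maxHeartbeats 1000000 in
lemma inv8 : InvLine Pb Qb (lineSet (10) (10) (-5)) := by
  refine ⟨10, 10, -5, by norm_num, rfl, ?_⟩
  rintro ⟨x, y⟩ hq
  have hxy : (10 : ℝ) * x + (10 : ℝ) * y + (-5 : ℝ) = 0 := hq
  rw [Pb_ev x y, Qb_ev x y]
  linear_combination ((-2510909408 : ℝ) + (144319211946 : ℝ) * y ^ 1 + (203599544170 : ℝ) * y ^ 2 + (-210833957130 : ℝ) * y ^ 3 + (23578995058 : ℝ) * y ^ 4 + (129833679804 : ℝ) * y ^ 5 + (-43294766256 : ℝ) * x ^ 1 + (1013747918878 : ℝ) * x ^ 1 * y ^ 1 + (1442410605972 : ℝ) * x ^ 1 * y ^ 2 + (-1227217750 : ℝ) * x ^ 1 * y ^ 3 + (12646389144 : ℝ) * x ^ 1 * y ^ 4 + (204287704880 : ℝ) * x ^ 2 + (3791312614242 : ℝ) * x ^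 2 * y ^ 1 + (3096499362394 : ℝ) * x ^ 2 * y ^ 2 + (-707284751736 : ℝ) * x ^ 2 * y ^ 3 + (2643752370000 : ℝ) * x ^ 3 + (8208658574010 : ℝ) * x ^ 3 * y ^ 1 + (913191364008 : ℝ) * x ^ 3 * y ^ 2 + (7052937535728 : ℝ) * x ^ 4 + (7280823214620 : ℝ) * x ^ 4 * y ^ 1 + (5777534389536 : ℝ) * x ^ 5) * hxy

set_option maxHeartbeats 0 in
lemma pv_rel (P : MvPolynomial (Fin 2) ℝ) (hP : P.totalDegree ≤ 5)
    (hPe0 : pev P (((-9 : ℝ)/11), ((-28 : ℝ)/11)) = 0)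
    (hPe1 : pev P (((-3 : ℝ)/4), ((5 : ℝ)/4)) = 0)
    (hPe2 : pev P (((-1 : ℝ)/2), (0 : ℝ)) = 0)
    (hPe3 : pev P (((-5 : ℝ)/11), ((4 : ℝ)/11)) = 0)
    (hPe4 : pev P (((-7 : ℝ)/18), ((8 : ℝ)/9)) = 0)
    (hPe5 : pev P (((-9 : ℝ)/25), ((-7 : ℝ)/50)) = 0)
    (hPe6 : pev P (((-1 : ℝ)/3), (0 : ℝ)) = 0)
    (hPe7 : pev P (((-1 : ℝ)/3), ((4 : ℝ)/3)) = 0)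
    (hPe8 : pev P (((-1 : ℝ)/4), ((-1 : ℝ)/4)) = 0)
    (hPe9 : pev P (((-1 : ℝ)/5), ((7 : ℝ)/10)) = 0)
    (hPe10 : pev P (((-17 : ℝ)/99), ((28 : ℝ)/33)) = 0)
    (hPe11 : pev P (((-1 : ℝ)/12), ((7 : ℝ)/12)) = 0)
    (hPe12 : pev P (((-1 : ℝ)/19), (0 : ℝ)) = 0)
    (hPe13 : pev P (((1 : ℝ)/15), ((-17 : ℝ)/30)) = 0)
    (hPe14 : pev P (((1 : ℝ)/9), (0 : ℝ)) = 0)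
    (hPe15 : pev P (((5 : ℝ)/12), ((-11 : ℝ)/12)) = 0)
    (hPe16 : pev P (((3 : ℝ)/7), ((-16 : ℝ)/7)) = 0)
    (hPe17 : pev P (((1 : ℝ)/2), (0 : ℝ)) = 0)
    :
    (MvPolynomial.coeff (Finsupp.single 0 0 + Finsupp.single 1 0) P = ((1 : ℝ)/2052) * MvPolynomial.coeff (Finsupp.single 0 5 + Finsupp.single 1 0) P) ∧
    (MvPolynomial.coeff (Finsupp.single 0 0 + Finsupp.single 1 1) P = ((23177 : ℝ)/137384127) * MvPolynomial.coeff (Finsupp.single 0 3 + Finsupp.single 1 2) P + ((-1236161 : ℝ)/824304762) * MvPolynomial.coeff (Finsupp.single 0 4 + Finsupp.single 1 1) P + ((-17850347 : ℝ)/36544177782) * MvPolynomial.coeff (Finsupp.single 0 5 + Finsupp.single 1 0) P) ∧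
    (MvPolynomial.coeff (Finsupp.single 0 0 + Finsupp.single 1 2) P = ((-10025357 : ℝ)/549536508) * MvPolynomial.coeff (Finsupp.single 0 3 + Finsupp.single 1 2) P + ((23157979 : ℝ)/1648609524) * MvPolynomial.coeff (Finsupp.single 0 4 + Finsupp.single 1 1) P + ((-81293815 : ℝ)/73088355564) * MvPolynomial.coeff (Finsupp.single 0 5 + Finsupp.single 1 0) P) ∧
    (MvPolynomial.coeff (Finsupp.single 0 0 + Finsupp.single 1 3) P = ((-202658 : ℝ)/137384127) * MvPolynomial.coeff (Finsupp.single 0 3 + Finsupp.single 1 2) P + ((11241617 : ℝ)/824304762) * MvPolynomial.coeff (Finsupp.single 0 4 + Finsupp.single 1 1) P + ((-16839080 : ℝ)/2610298413) * MvPolynomial.coeff (Finsupp.single 0 5 + Finsupp.single 1 0) P) ∧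
    (MvPolynomial.coeff (Finsupp.single 0 0 + Finsupp.single 1 4) P = ((9656117 : ℝ)/137384127) * MvPolynomial.coeff (Finsupp.single 0 3 + Finsupp.single 1 2) P + ((-20868844 : ℝ)/412152381) * MvPolynomial.coeff (Finsupp.single 0 4 + Finsupp.single 1 1) P + ((-10505953 : ℝ)/870099471) * MvPolynomial.coeff (Finsupp.single 0 5 + Finsupp.single 1 0) P) ∧
    (MvPolynomial.coeff (Finsupp.single 0 0 + Finsupp.single 1 5) P = ((-620840 : ℝ)/45794709) * MvPolynomial.coeff (Finsupp.single 0 3 + Finsupp.single 1 2) P + ((559828 : ℝ)/137384127) * MvPolynomial.coeff (Finsupp.single 0 4 + Finsupp.single 1 1) P + ((-126632728 : ℝ)/6090696297) * MvPolynomial.coeff (Finsupp.single 0 5 + Finsupp.single 1 0) P) ∧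
    (MvPolynomial.coeff (Finsupp.single 0 1 + Finsupp.single 1 0) P = ((13 : ℝ)/2052) * MvPolynomial.coeff (Finsupp.single 0 5 + Finsupp.single 1 0) P) ∧
    (MvPolynomial.coeff (Finsupp.single 0 1 + Finsupp.single 1 1) P = ((-12804827 : ℝ)/137384127) * MvPolynomial.coeff (Finsupp.single 0 3 + Finsupp.single 1 2) P + ((53833577 : ℝ)/824304762) * MvPolynomial.coeff (Finsupp.single 0 4 + Finsupp.single 1 1) P + ((-96906790 : ℝ)/6090696297) * MvPolynomial.coeff (Finsupp.single 0 5 + Finsupp.single 1 0) P) ∧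
    (MvPolynomial.coeff (Finsupp.single 0 1 + Finsupp.single 1 2) P = ((-11310685 : ℝ)/183178836) * MvPolynomial.coeff (Finsupp.single 0 3 + Finsupp.single 1 2) P + ((66041783 : ℝ)/549536508) * MvPolynomial.coeff (Finsupp.single 0 4 + Finsupp.single 1 1) P + ((-1627075675 : ℝ)/10441193652) * MvPolynomial.coeff (Finsupp.single 0 5 + Finsupp.single 1 0) P) ∧
    (MvPolynomial.coeff (Finsupp.single 0 1 + Finsupp.single 1 3) P = ((64292834 : ℝ)/137384127) * MvPolynomial.coeff (Finsupp.single 0 3 + Finsupp.single 1 2) P + ((-221454875 : ℝ)/824304762) * MvPolynomial.coeff (Finsupp.single 0 4 + Finsupp.single 1 1) P + ((-250814698 : ℝ)/2030232099) * MvPolynomial.coeff (Finsupp.single 0 5 + Finsupp.single 1 0) P) ∧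
    (MvPolynomial.coeff (Finsupp.single 0 1 + Finsupp.single 1 4) P = ((1605349 : ℝ)/45794709) * MvPolynomial.coeff (Finsupp.single 0 3 + Finsupp.single 1 2) P + ((-7390778 : ℝ)/137384127) * MvPolynomial.coeff (Finsupp.single 0 4 + Finsupp.single 1 1) P + ((-58553485 : ℝ)/676744033) * MvPolynomial.coeff (Finsupp.single 0 5 + Finsupp.single 1 0) P) ∧
    (MvPolynomial.coeff (Finsupp.single 0 1 + Finsupp.single 1 5) P = (0 : ℝ)) ∧
    (MvPolynomial.coeff (Finsupp.single 0 2 + Finsupp.single 1 0) P = ((-145 : ℝ)/2052) * MvPolynomial.coeff (Finsupp.single 0 5 + Finsupp.single 1 0) P) ∧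
    (MvPolynomial.coeff (Finsupp.single 0 2 + Finsupp.single 1 1) P = ((-12330094 : ℝ)/45794709) * MvPolynomial.coeff (Finsupp.single 0 3 + Finsupp.single 1 2) P + ((85455931 : ℝ)/274768254) * MvPolynomial.coeff (Finsupp.single 0 4 + Finsupp.single 1 1) P + ((-15375108565 : ℝ)/36544177782) * MvPolynomial.coeff (Finsupp.single 0 5 + Finsupp.single 1 0) P) ∧
    (MvPolynomial.coeff (Finsupp.single 0 2 + Finsupp.single 1 2) P = ((2519439 : ℝ)/5088301) * MvPolynomial.coeff (Finsupp.single 0 3 + Finsupp.single 1 2) P + ((1370809 : ℝ)/15264903) * MvPolynomial.coeff (Finsupp.single 0 4 + Finsupp.single 1 1) P + ((-12472995478 : ℝ)/18272088891) * MvPolynomial.coeff (Finsupp.single 0 5 + Finsupp.single 1 0) P) ∧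
    (MvPolynomial.coeff (Finsupp.single 0 2 + Finsupp.single 1 3) P = ((11662966 : ℝ)/15264903) * MvPolynomial.coeff (Finsupp.single 0 3 + Finsupp.single 1 2) P + ((-21513911 : ℝ)/45794709) * MvPolynomial.coeff (Finsupp.single 0 4 + Finsupp.single 1 1) P + ((8975380 : ℝ)/870099471) * MvPolynomial.coeff (Finsupp.single 0 5 + Finsupp.single 1 0) P) ∧
    (MvPolynomial.coeff (Finsupp.single 0 2 + Finsupp.single 1 4) P = (0 : ℝ)) ∧
    (MvPolynomial.coeff (Finsupp.single 0 2 + Finsupp.single 1 5) P = (0 : ℝ)) ∧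
    (MvPolynomial.coeff (Finsupp.single 0 3 + Finsupp.single 1 0) P = ((-565 : ℝ)/2052) * MvPolynomial.coeff (Finsupp.single 0 5 + Finsupp.single 1 0) P) ∧
    (MvPolynomial.coeff (Finsupp.single 0 3 + Finsupp.single 1 1) P = ((-1876616 : ℝ)/15264903) * MvPolynomial.coeff (Finsupp.single 0 3 + Finsupp.single 1 2) P + ((69906557 : ℝ)/91589418) * MvPolynomial.coeff (Finsupp.single 0 4 + Finsupp.single 1 1) P + ((-18488739922 : ℝ)/18272088891) * MvPolynomial.coeff (Finsupp.single 0 5 + Finsupp.single 1 0) P) ∧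
    (MvPolynomial.coeff (Finsupp.single 0 3 + Finsupp.single 1 3) P = (0 : ℝ)) ∧
    (MvPolynomial.coeff (Finsupp.single 0 3 + Finsupp.single 1 4) P = (0 : ℝ)) ∧
    (MvPolynomial.coeff (Finsupp.single 0 3 + Finsupp.single 1 5) P = (0 : ℝ)) ∧
    (MvPolynomial.coeff (Finsupp.single 0 4 + Finsupp.single 1 0) P = ((47 : ℝ)/171) * MvPolynomial.coeff (Finsupp.single 0 5 + Finsupp.single 1 0) P) ∧
    (MvPolynomial.coeff (Finsupp.single 0 4 + Finsupp.single 1 2) P = (0 : ℝ)) ∧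
    (MvPolynomial.coeff (Finsupp.single 0 4 + Finsupp.single 1 3) P = (0 : ℝ)) ∧
    (MvPolynomial.coeff (Finsupp.single 0 4 + Finsupp.single 1 4) P = (0 : ℝ)) ∧
    (MvPolynomial.coeff (Finsupp.single 0 4 + Finsupp.single 1 5) P = (0 : ℝ)) ∧
    (MvPolynomial.coeff (Finsupp.single 0 5 + Finsupp.single 1 1) P = (0 : ℝ)) ∧
    (MvPolynomial.coeff (Finsupp.single 0 5 + Finsupp.single 1 2) P = (0 : ℝ)) ∧
    (MvPolynomial.coeff (Finsupp.single 0 5 + Finsupp.single 1 3) P = (0 : ℝ)) ∧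
    (MvPolynomial.coeff (Finsupp.single 0 5 + Finsupp.single 1 4) P = (0 : ℝ)) ∧
    (MvPolynomial.coeff (Finsupp.single 0 5 + Finsupp.single 1 5) P = (0 : ℝ)) := by
  rw [expand5 P hP] at hPe0 hPe1 hPe2 hPe3 hPe4 hPe5 hPe6 hPe7 hPe8 hPe9 hPe10 hPe11 hPe12 hPe13 hPe14 hPe15 hPe16 hPe17
  simp only [Finset.sum_range_succ, Finset.sum_range_zero, zero_add] at hPe0 hPe1 hPe2 hPe3 hPe4 hPe5 hPe6 hPe7 hPe8 hPe9 hPe10 hPe11 hPe12 hPe13 hPe14 hPe15 hPe16 hPe17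
  have Zp15 := coeff_high P hP 1 5 (by norm_num)
  have Zp24 := coeff_high P hP 2 4 (by norm_num)
  have Zp25 := coeff_high P hP 2 5 (by norm_num)
  have Zp33 := coeff_high P hP 3 3 (by norm_num)
  have Zp34 := coeff_high P hP 3 4 (by norm_num)
  have Zp35 := coeff_high P hP 3 5 (by norm_num)
  have Zp42 := coeff_high P hP 4 2 (by norm_num)
  have Zp43 := coeff_high P hP 4 3 (by norm_num)
  have Zp44 := coeff_high P hP 4 4 (by norm_num)
  have Zp45 := coeff_high P hP 4 5 (by norm_num)
  have Zp51 := coeff_high P hP 5 1 (by norm_num)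
  have Zp52 := coeff_high P hP 5 2 (by norm_num)
  have Zp53 := coeff_high P hP 5 3 (by norm_num)
  have Zp54 := coeff_high P hP 5 4 (by norm_num)
  have Zp55 := coeff_high P hP 5 5 (by norm_num)
  have pvP00 : MvPolynomial.coeff (Finsupp.single 0 0 + Finsupp.single 1 0) P = ((1 : ℝ)/2052) * MvPolynomial.coeff (Finsupp.single 0 5 + Finsupp.single 1 0) P := by
    linear_combination ((4 : ℝ)/187) * hPe2 + ((-27 : ℝ)/320) * hPe6 + ((130321 : ℝ)/159936) * hPe12 + ((2187 : ℝ)/8624) * hPe14 + ((-4 : ℝ)/735) * hPe17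
  have pvP01 : MvPolynomial.coeff (Finsupp.single 0 0 + Finsupp.single 1 1) P = ((23177 : ℝ)/137384127) * MvPolynomial.coeff (Finsupp.single 0 3 + Finsupp.single 1 2) P + ((-1236161 : ℝ)/824304762) * MvPolynomial.coeff (Finsupp.single 0 4 + Finsupp.single 1 1) P + ((-17850347 : ℝ)/36544177782) * MvPolynomial.coeff (Finsupp.single 0 5 + Finsupp.single 1 0) P := by
    linear_combination ((-7540363897 : ℝ)/48828150524160) * hPe0 + ((18380656 : ℝ)/8929968255) * hPe1 + ((-2369986992 : ℝ)/6660586009) * hPe2 + ((3453288293917 : ℝ)/5829483276864) * hPe3 + ((-31057536699 : ℝ)/61848298655) * hPe4 + ((16236271484375 : ℝ)/11502440238366) * hPe5 + ((-13746535527 : ℝ)/9118235392) * hPe6 + ((307428569 : ℝ)/1302605056) * hPe7 + ((-1570419760 : ℝ)/4533676191) * hPe8 + ((88142370000 : ℝ)/46624102063) * hPe9 + ((-5404074782139 : ℝ)/2323725300680) * hPe10 + ((4606458288 : ℝ)/1958995885) * hPe11 + ((-29013077393479 : ℝ)/22786470244608) * hPe12 + ((-1721019375 : ℝ)/3287042446)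 * hPe13 + ((437833866051 : ℝ)/1228682219072) * hPe14 + ((-207068240 : ℝ)/13041315463) * hPe15 + ((29718960943 : ℝ)/7810012851696) * hPe16 + ((166321801 : ℝ)/26179308645) * hPe17 + ((5977401661709 : ℝ)/24935219050500) * Zp15 + ((-1868964874993 : ℝ)/49870438101000) * Zp24 + ((-11103509116276133 : ℝ)/432002670049912500) * Zp25 + ((40993148821 : ℝ)/6233804762625) * Zp33 + ((-1604714465986993 : ℝ)/1728010680199650000) * Zp34 + ((11467578312082305519397 : ℝ)/239502280275671490000000) * Zp35 + ((-109001249429 : ℝ)/149611314303000) * Zp42 + ((-104432340906749 : ℝ)/96000593344425000) * Zp43 + ((-482080097327096357561 : ℝ)/119751140137835745000000) * Zp44 + ((-30607394832675810128768839 : ℝ)/4149377005776008564250000000) * Zp45 + ((137551583803 : ℝ)/112208485727250) * Zp51 + ((984896756052371 : ℝ)/5184032040598950000) * Zp52 + ((500123783860248490847 : ℝ)/239502280275671490000000) * Zp53 + ((-17384779747375981899795547 : ℝ)/8298754011552017128500000000) * Zp54 + ((3589038175299007685561866943497 : ℝ)/287551826500277393502525000000000) * Zp55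
  have pvP02 : MvPolynomial.coeff (Finsupp.single 0 0 + Finsupp.single 1 2) P = ((-10025357 : ℝ)/549536508) * MvPolynomial.coeff (Finsupp.single 0 3 + Finsupp.single 1 2) P + ((23157979 : ℝ)/1648609524) * MvPolynomial.coeff (Finsupp.single 0 4 + Finsupp.single 1 1) P + ((-81293815 : ℝ)/73088355564) * MvPolynomial.coeff (Finsupp.single 0 5 + Finsupp.single 1 0) P := by
    linear_combination ((-3921284389 : ℝ)/16276050174720) * hPe0 + ((-7835638292 : ℝ)/98229650805) * hPe1 + ((11741200868 : ℝ)/6660586009) * hPe2 + ((-8312220272389 : ℝ)/5829483276864) * hPe3 + ((207094271157 : ℝ)/123696597310) * hPe4 + ((-110402048828125 : ℝ)/15336586984488) * hPe5 + ((176467841943 : ℝ)/45591176960) * hPe6 + ((-151651085 : ℝ)/1302605056) * hPe7 + ((415611212164 : ℝ)/86139847629) * hPe8 + ((-180170152500 : ℝ)/46624102063) * hPe9 + ((-5342489904609 : ℝ)/18589802405440) * hPe10 + ((72053324652 : ℝ)/13712971195) * hPe11 + ((-117299986277149 : ℝ)/22786470244608) * hPe12 + ((99546215625 : ℝ)/92037188488)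 * hPe13 + ((-40090022145 : ℝ)/111698383552) * hPe14 + ((3106645868 : ℝ)/91289208241) * hPe15 + ((-74806494791 : ℝ)/15620025703392) * hPe16 + ((-962572831 : ℝ)/52358617290) * hPe17 + ((-47845286834057 : ℝ)/232728711138000) * Zp15 + ((27966193836389 : ℝ)/465457422276000) * Zp24 + ((49529864587241939 : ℝ)/4032024920465850000) * Zp25 + ((-4319607603749 : ℝ)/174546533353500) * Zp33 + ((-666679869266577931 : ℝ)/16128099681863400000) * Zp34 + ((-180106090888913864231401 : ℝ)/2235354615906267240000000) * Zp35 + ((103784102449451 : ℝ)/4189116800484000) * Zp42 + ((677500731559082159 : ℝ)/24192149522795100000) * Zp43 + ((19780673109284847290471 : ℝ)/372559102651044540000000) * Zp44 + ((1642434788863507288182687787 : ℝ)/38727518720576079933000000000) * Zp45 + ((-104556623848889 : ℝ)/6283675200726000) * Zp51 + ((-3495264657257022029 : ℝ)/145152897136770600000) * Zp52 + ((-190584575037042779782753 : ℝ)/6706063847718801720000000) * Zp53 + ((-3202852938169669771676301649 : ℝ)/77455037441152159866000000000) * Zp54 + ((-11352652862495539577096256245291 : ℝ)/243983367939629303577900000000000)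 * Zp55
  have pvP03 : MvPolynomial.coeff (Finsupp.single 0 0 + Finsupp.single 1 3) P = ((-202658 : ℝ)/137384127) * MvPolynomial.coeff (Finsupp.single 0 3 + Finsupp.single 1 2) P + ((11241617 : ℝ)/824304762) * MvPolynomial.coeff (Finsupp.single 0 4 + Finsupp.single 1 1) P + ((-16839080 : ℝ)/2610298413) * MvPolynomial.coeff (Finsupp.single 0 5 + Finsupp.single 1 0) P := by
    linear_combination ((7786508389 : ℝ)/6975450074880) * hPe0 + ((-836297848 : ℝ)/19645930161) * hPe1 + ((8227573608 : ℝ)/6660586009) * hPe2 + ((-9048140093663 : ℝ)/2914741638432) * hPe3 + ((18211767921 : ℝ)/5622572605) * hPe4 + ((-349472656250 : ℝ)/74691170379) * hPe5 + ((26863486977 : ℝ)/3256512640) * hPe6 + ((-672263245 : ℝ)/651302528) * hPe7 + ((-13685418616 : ℝ)/7830895239) * hPe8 + ((-587468400000 : ℝ)/46624102063) * hPe9 + ((711108779739039 : ℝ)/74359209621760) * hPe10 + ((-2121543048 : ℝ)/1246633745) * hPe11 + ((12833272247683 : ℝ)/3255210034944) * hPe12 + ((-7158431250 : ℝ)/11504648561)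 * hPe13 + ((-69240508695 : ℝ)/87763015648) * hPe14 + ((9573198920 : ℝ)/91289208241) * hPe15 + ((-1758092856793 : ℝ)/124960205627136) * hPe16 + ((-8555863 : ℝ)/3739901235) * hPe17 + ((-8863786544038 : ℝ)/8727326667675) * Zp15 + ((18126031040233 : ℝ)/139637226682800) * Zp24 + ((871976329361065697 : ℝ)/4838429904559020000) * Zp25 + ((-1925747295979 : ℝ)/69818613341400) * Zp33 + ((1515038380224703 : ℝ)/4838429904559020000) * Zp34 + ((-159100645045059619248037 : ℝ)/670606384771880172000000) * Zp35 + ((2162133902249 : ℝ)/418911680048400) * Zp42 + ((9352971630724433 : ℝ)/537603322728780000) * Zp43 + ((3276967919272703518003 : ℝ)/167651596192970043000000) * Zp44 + ((14549978767935053185856221 : ℝ)/181535244002700374685937500) * Zp45 + ((-1902796231559 : ℝ)/157091880018150) * Zp51 + ((-109441539757023491 : ℝ)/14515289713677060000) * Zp52 + ((-14105159792043887750987 : ℝ)/670606384771880172000000) * Zp53 + ((4695120521202332559863531 : ℝ)/11618255616172823979900000000) * Zp54 + ((-142905927007269945434290948033649 : ℝ)/1610290228401553403614140000000000) * Zp5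5
  have pvP04 : MvPolynomial.coeff (Finsupp.single 0 0 + Finsupp.single 1 4) P = ((9656117 : ℝ)/137384127) * MvPolynomial.coeff (Finsupp.single 0 3 + Finsupp.single 1 2) P + ((-20868844 : ℝ)/412152381) * MvPolynomial.coeff (Finsupp.single 0 4 + Finsupp.single 1 1) P + ((-10505953 : ℝ)/870099471) * MvPolynomial.coeff (Finsupp.single 0 5 + Finsupp.single 1 0) P := by
    linear_combination ((91023097 : ℝ)/96881251040) * hPe0 + ((1609121344 : ℝ)/8929968255) * hPe1 + ((-43171812960 : ℝ)/6660586009) * hPe2 + ((4172819214047 : ℝ)/728685409608) * hPe3 + ((-257277831444 : ℝ)/61848298655) * hPe4 + ((2195031250000 : ℝ)/91289208241) * hPe5 + ((-11572494771 : ℝ)/814128160) * hPe6 + ((75529615 : ℝ)/162825632) * hPe7 + ((-1117547420416 : ℝ)/86139847629) * hPe8 + ((28844715000 : ℝ)/6660586009) * hPe9 + ((5444099615889 : ℝ)/4647450601360) * hPe10 + ((-60530438208 : ℝ)/13712971195) * hPe11 + ((1032120295751 : ℝ)/135633751456) * hPe12 + ((15913125000 : ℝ)/11504648561) * hPe13 +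 ((-1182885849 : ℝ)/447770488) * hPe14 + ((-27296505344 : ℝ)/91289208241) * hPe15 + ((75183643871 : ℝ)/3905006425848) * hPe16 + ((316803596 : ℝ)/1246633745) * hPe17 + ((21880364328143 : ℝ)/29091088892250) * Zp15 + ((-3474923461337 : ℝ)/19394059261500) * Zp24 + ((108107221542281537 : ℝ)/4032024920465850000) * Zp25 + ((2240480875802 : ℝ)/43636633338375) * Zp33 + ((34527911973281249 : ℝ)/336002076705487500) * Zp34 + ((57568261409098533251149 : ℝ)/279419326988283405000000) * Zp35 + ((-33396297831649 : ℝ)/523639600060500) * Zp42 + ((-783098225488694539 : ℝ)/12096074761397550000) * Zp43 + ((-9314410555047873957431 : ℝ)/69854831747070851250000) * Zp44 + ((-10411803445912315971489209 : ℝ)/151279370002250312238281250) * Zp45 + ((34365522557011 : ℝ)/785459400090750) * Zp51 + ((1133188439669764921 : ℝ)/18144112142096325000) * Zp52 + ((52413595617538922204897 : ℝ)/838257980964850215000000) * Zp53 + ((213466096575289536123855803 : ℝ)/2151528817809782218500000000) * Zp54 + ((4074024948553995321253329402653 : ℝ)/41934641364623786552451562500000) * Zp55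
  have pvP05 : MvPolynomial.coeff (Finsupp.single 0 0 + Finsupp.single 1 5) P = ((-620840 : ℝ)/45794709) * MvPolynomial.coeff (Finsupp.single 0 3 + Finsupp.single 1 2) P + ((559828 : ℝ)/137384127) * MvPolynomial.coeff (Finsupp.single 0 4 + Finsupp.single 1 1) P + ((-126632728 : ℝ)/6090696297) * MvPolynomial.coeff (Finsupp.single 0 5 + Finsupp.single 1 0) P := by
    linear_combination ((-581847981 : ℝ)/271267502912) * hPe0 + ((-2134572608 : ℝ)/32743216935) * hPe1 + ((-17467634880 : ℝ)/6660586009) * hPe2 + ((374291586779 : ℝ)/121447568268) * hPe3 + ((-6595064712 : ℝ)/12369659731) * hPe4 + ((7247683593750 : ℝ)/639024457687) * hPe5 + ((-3343204359 : ℝ)/356181070) * hPe6 + ((3472557 : ℝ)/10176602) * hPe7 + ((-136826866112 : ℝ)/28713282543) * hPe8 + ((-4610790000 : ℝ)/6660586009) * hPe9 + ((-2407563126441 : ℝ)/2655686057920) * hPe10 + ((399299904 : ℝ)/279856555) * hPe11 + ((9400042652715 : ℝ)/1898872520384) * hPe12 + ((4240653750 : ℝ)/11504648561) * hPe13 + ((-18636607251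 : ℝ)/6981148972) * hPe14 + ((794785344 : ℝ)/91289208241) * hPe15 + ((-3791138183 : ℝ)/946668224448) * hPe16 + ((222648840 : ℝ)/1745287243) * hPe17 + ((1093033734691 : ℝ)/4848514815375) * Zp15 + ((1047077441093 : ℝ)/9697029630750) * Zp24 + ((-527312619069073 : ℝ)/2776876666987500) * Zp25 + ((-299301945977 : ℝ)/14545544446125) * Zp33 + ((-2644936403030297 : ℝ)/30545643336862500) * Zp34 + ((2663971199013856495343 : ℝ)/46569887831380567500000) * Zp35 + ((1938003501887 : ℝ)/87273266676750) * Zp42 + ((1498877088373691 : ℝ)/91636930010587500) * Zp43 + ((337155957776392033511 : ℝ)/3880823985948380625000) * Zp44 + ((-47867027431658127977339291 : ℝ)/806823306678668331937500000) * Zp45 + ((-873082005368 : ℝ)/130909900015125) * Zp51 + ((-5924608071794473 : ℝ)/274910790031762500) * Zp52 + ((-2130779535242389763821 : ℝ)/139709663494141702500000) * Zp53 + ((-26977382726975989182225517 : ℝ)/403411653339334165968750000) * Zp54 + ((4121661222919154885460083758111 : ℝ)/111825710305663430806537500000000) * Zp55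
  have pvP10 : MvPolynomial.coeff (Finsupp.single 0 1 + Finsupp.single 1 0) P = ((13 : ℝ)/2052) * MvPolynomial.coeff (Finsupp.single 0 5 + Finsupp.single 1 0) P := by
    linear_combination ((4 : ℝ)/17) * hPe2 + ((-27 : ℝ)/32) * hPe6 + ((-130321 : ℝ)/26656) * hPe12 + ((2187 : ℝ)/392) * hPe14 + ((-4 : ℝ)/49) * hPe17
  have pvP11 : MvPolynomial.coeff (Finsupp.single 0 1 + Finsupp.single 1 1) P = ((-12804827 : ℝ)/137384127) * MvPolynomial.coeff (Finsupp.single 0 3 + Finsupp.single 1 2) P + ((53833577 : ℝ)/824304762) * MvPolynomial.coeff (Finsupp.single 0 4 + Finsupp.single 1 1) P + ((-96906790 : ℝ)/6090696297) * MvPolynomial.coeff (Finsupp.single 0 5 + Finsupp.single 1 0) P := by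
    linear_combination ((-23347724521 : ℝ)/12207037631040) * hPe0 + ((-846871088 : ℝ)/1785993651) * hPe1 + ((52759869496 : ℝ)/6660586009) * hPe2 + ((-3541825788347 : ℝ)/728685409608) * hPe3 + ((495008140977 : ℝ)/61848298655) * hPe4 + ((-400514564453125 : ℝ)/11502440238366) * hPe5 + ((176687498067 : ℝ)/11397794240) * hPe6 + ((93044749 : ℝ)/325651264) * hPe7 + ((125036189488 : ℝ)/4533676191) * hPe8 + ((-1065013010000 : ℝ)/46624102063) * hPe9 + ((-9039916448937 : ℝ)/2323725300680) * hPe10 + ((48641448144 : ℝ)/1958995885) * hPe11 + ((-95540199246301 : ℝ)/5696617561152) * hPe12 + ((-9601621875 : ℝ)/3287042446) * hPe13 + ((379554608403 : ℝ)/153585277384) * hPe14 + ((-804115120 : ℝ)/13041315463) * hPe15 + ((10711353205 : ℝ)/976251606462) * hPe16 + ((1037767069 : ℝ)/26179308645) * hPe17 + ((1109410908961 : ℝ)/2077934920875) * Zp15 + ((1234388404637 : ℝ)/16623479367000) * Zp24 + ((54693746206546549 : ℝ)/288001780033275000) * Zp25 + ((-2670798687443 : ℝ)/24935219050500) * Zp33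 + ((-164005696537911373 : ℝ)/576003560066550000) * Zp34 + ((-14643073046437800648133 : ℝ)/79834093425223830000000) * Zp35 + ((21067940473583 : ℝ)/149611314303000) * Zp42 + ((18291447082886809 : ℝ)/108000667512478125) * Zp43 + ((1875282755673122307409 : ℝ)/6652841118768652500000) * Zp44 + ((388171997847028162961423521 : ℝ)/1383125668592002854750000000) * Zp45 + ((-20528887830887 : ℝ)/224416971454500) * Zp51 + ((-731367920751668807 : ℝ)/5184032040598950000) * Zp52 + ((-38642385566291870724049 : ℝ)/239502280275671490000000) * Zp53 + ((-728767526765551388054262517 : ℝ)/2766251337184005709500000000) * Zp54 + ((-41540128048122679365218112085691 : ℝ)/191701217666851595668350000000000) * Zp55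
  have pvP12 : MvPolynomial.coeff (Finsupp.single 0 1 + Finsupp.single 1 2) P = ((-11310685 : ℝ)/183178836) * MvPolynomial.coeff (Finsupp.single 0 3 + Finsupp.single 1 2) P + ((66041783 : ℝ)/549536508) * MvPolynomial.coeff (Finsupp.single 0 4 + Finsupp.single 1 1) P + ((-1627075675 : ℝ)/10441193652) * MvPolynomial.coeff (Finsupp.single 0 5 + Finsupp.single 1 0) P := by
    linear_combination ((20507311957 : ℝ)/6975450074880) * hPe0 + ((-2030461604 : ℝ)/2976656085) * hPe1 + ((-20839304252 : ℝ)/6660586009) * hPe2 + ((-12352128561641 : ℝ)/1943161092288) * hPe3 + ((2104136654211 : ℝ)/123696597310) * hPe4 + ((81802345703125 : ℝ)/6572822993352) * hPe5 + ((27637771635 : ℝ)/1302605056) * hPe6 + ((-2292416355 : ℝ)/1302605056) * hPe7 + ((-935018885188 : ℝ)/28713282543) * hPe8 + ((-3083681362500 : ℝ)/46624102063) * hPe9 + ((19824257463219 : ℝ)/1161862650340) * hPe10 + ((459647097948 : ℝ)/13712971195) * hPe11 + ((28003647678001 : ℝ)/1085070011648) * hPe12 + ((566234701875 : ℝ)/92037188488)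 * hPe13 + ((-4171528527795 : ℝ)/175526031296) * hPe14 + ((33102218748 : ℝ)/91289208241) * hPe15 + ((-24247038725 : ℝ)/650834404308) * hPe16 + ((2126536491 : ℝ)/2493267490) * hPe17 + ((-29097535396141 : ℝ)/12929372841000) * Zp15 + ((59484064378817 : ℝ)/155152474092000) * Zp24 + ((544069875969029573 : ℝ)/896005537881300000) * Zp25 + ((-47050140549913 : ℝ)/232728711138000) * Zp33 + ((-1329392121594193213 : ℝ)/5376033227287800000) * Zp34 + ((-245545471861122047317291 : ℝ)/248372735100696360000000) * Zp35 + ((192165830689603 : ℝ)/1396372266828000) * Zp42 + ((1022122589246456741 : ℝ)/4032024920465850000) * Zp43 + ((32288451559657376985581 : ℝ)/93139775662761135000000) * Zp44 + ((26797794290707023134234833 : ℝ)/43465228642621863000000000) * Zp45 + ((-71903671930273 : ℝ)/523639600060500) * Zp51 + ((-8012327148063510367 : ℝ)/48384299045590200000) * Zp52 + ((-579130913614553911137269 : ℝ)/2235354615906267240000000) * Zp53 + ((-640498080534740732562579707 : ℝ)/2347122346701580602000000000) * Zp54 + ((-351630330315831102995294692463807 : ℝ)/596403788296871630968200000000000)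 * Zp55
  have pvP13 : MvPolynomial.coeff (Finsupp.single 0 1 + Finsupp.single 1 3) P = ((64292834 : ℝ)/137384127) * MvPolynomial.coeff (Finsupp.single 0 3 + Finsupp.single 1 2) P + ((-221454875 : ℝ)/824304762) * MvPolynomial.coeff (Finsupp.single 0 4 + Finsupp.single 1 1) P + ((-250814698 : ℝ)/2030232099) * MvPolynomial.coeff (Finsupp.single 0 5 + Finsupp.single 1 0) P := by
    linear_combination ((222690678793 : ℝ)/24414075262080) * hPe0 + ((17046525208 : ℝ)/19645930161) * hPe1 + ((-269570477608 : ℝ)/6660586009) * hPe2 + ((91181037885575 : ℝ)/2914741638432) * hPe3 + ((-966697497243 : ℝ)/61848298655) * hPe4 + ((903951044921875 : ℝ)/5751220119183) * hPe5 + ((-2031577095621 : ℝ)/22795588480) * hPe6 + ((-160121129 : ℝ)/651302528) * hPe7 + ((-7626388756792 : ℝ)/86139847629) * hPe8 + ((142831910000 : ℝ)/46624102063) * hPe9 + ((8492433647445 : ℝ)/464745060136) * hPe10 + ((-55468073832 : ℝ)/2742594239) * hPe11 + ((651377943155231 : ℝ)/11393235122304) * hPe12 + ((111438331875 : ℝ)/11504648561)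 * hPe13 + ((-14510278244871 : ℝ)/614341109536) * hPe14 + ((-127890678632 : ℝ)/91289208241) * hPe15 + ((-7321011551 : ℝ)/1952503212924) * hPe16 + ((45106895969 : ℝ)/26179308645) * hPe17 + ((-64312246547 : ℝ)/43097909470) * Zp15 + ((-170247716803 : ℝ)/1861829689104) * Zp24 + ((52982091974604647 : ℝ)/537603322728780000) * Zp25 + ((1251779556283 : ℝ)/13963722668280) * Zp33 + ((1098869858250704609 : ℝ)/1612809968186340000) * Zp34 + ((361653809556846605551 : ℝ)/24837273510069636000000) * Zp35 + ((-29469302966461 : ℝ)/83782336009680) * Zp42 + ((-1539066137319349477 : ℝ)/4838429904559020000) * Zp43 + ((-33986452327589142618821 : ℝ)/55883865397656681000000) * Zp44 + ((-311755498654041188959964461 : ℝ)/1290917290685869331100000000) * Zp45 + ((3455131633832 : ℝ)/15709188001815) * Zp51 + ((4974696966993065381 : ℝ)/14515289713677060000) * Zp52 + ((176157368120351994176827 : ℝ)/670606384771880172000000) * Zp53 + ((2243464597302965738384487283 : ℝ)/3872751872057607993300000000) * Zp54 + ((3579638255547679890531055834909 : ℝ)/19880126276562387698940000000000) * Zp5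5
  have pvP14 : MvPolynomial.coeff (Finsupp.single 0 1 + Finsupp.single 1 4) P = ((1605349 : ℝ)/45794709) * MvPolynomial.coeff (Finsupp.single 0 3 + Finsupp.single 1 2) P + ((-7390778 : ℝ)/137384127) * MvPolynomial.coeff (Finsupp.single 0 4 + Finsupp.single 1 1) P + ((-58553485 : ℝ)/676744033) * MvPolynomial.coeff (Finsupp.single 0 5 + Finsupp.single 1 0) P := by
    linear_combination ((-5176135217 : ℝ)/406901254368) * hPe0 + ((842346784 : ℝ)/32743216935) * hPe1 + ((-106360621440 : ℝ)/6660586009) * hPe2 + ((132333132371 : ℝ)/9342120636) * hPe3 + ((-44153535456 : ℝ)/12369659731) * hPe4 + ((565609375000 : ℝ)/8227782717) * hPe5 + ((-134978375169 : ℝ)/2849448560) * hPe6 + ((3930267 : ℝ)/81412816) * hPe7 + ((-980904893024 : ℝ)/28713282543) * hPe8 + ((-149932140000 : ℝ)/46624102063) * hPe9 + ((7722668929239 : ℝ)/1327843028960) * hPe10 + ((-61262283168 : ℝ)/13712971195) * hPe11 + ((27874343703085 : ℝ)/949436260192) * hPe12 + ((28390905000 : ℝ)/11504648561) * hPe13 +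 ((-85658158287 : ℝ)/6981148972) * hPe14 + ((-35459978592 : ℝ)/91289208241) * hPe15 + ((12160721657 : ℝ)/473334112224) * hPe16 + ((1349498720 : ℝ)/1745287243) * hPe17 + ((4571534366177 : ℝ)/3232343210250) * Zp15 + ((4453373741269 : ℝ)/9697029630750) * Zp24 + ((-20270750280510157 : ℝ)/40727524449150000) * Zp25 + ((1969502742293 : ℝ)/29091088892250) * Zp33 + ((-24171202977992927 : ℝ)/61091286673725000) * Zp34 + ((513559050506820102977 : ℝ)/646803997658063437500) * Zp35 + ((-203969705179 : ℝ)/87273266676750) * Zp42 + ((-30028572452193463 : ℝ)/366547720042350000) * Zp43 + ((5618164431458972952103 : ℝ)/23284943915690283750000) * Zp44 + ((-295824686534961460653359227 : ℝ)/537882204452445554625000000) * Zp45 + ((9956262051437 : ℝ)/261819800030250) * Zp51 + ((-202034926951009 : ℝ)/274910790031762500) * Zp52 + ((1405299157810319340529 : ℝ)/17463707936767712812500) * Zp53 + ((-1302238103317086300189218201 : ℝ)/6454586453429346655500000000) * Zp54 + ((12977967175199489614111601506589 : ℝ)/24850157845702984623675000000000) * Zp55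
  have pvP15 : MvPolynomial.coeff (Finsupp.single 0 1 + Finsupp.single 1 5) P = (0 : ℝ) := by
    linear_combination (1 : ℝ) * Zp15
  have pvP20 : MvPolynomial.coeff (Finsupp.single 0 2 + Finsupp.single 1 0) P = ((-145 : ℝ)/2052) * MvPolynomial.coeff (Finsupp.single 0 5 + Finsupp.single 1 0) P := by
    linear_combination ((-668 : ℝ)/187) * hPe2 + ((945 : ℝ)/64) * hPe6 + ((-4039951 : ℝ)/159936) * hPe12 + ((115911 : ℝ)/8624) * hPe14 + ((92 : ℝ)/147) * hPe17
  have pvP21 : MvPolynomial.coeff (Finsupp.single 0 2 + Finsupp.single 1 1) P = ((-12330094 : ℝ)/45794709) * MvPolynomial.coeff (Finsupp.single 0 3 + Finsupp.single 1 2) P + ((85455931 : ℝ)/274768254) * MvPolynomial.coeff (Finsupp.single 0 4 + Finsupp.single 1 1) P + ((-15375108565 : ℝ)/36544177782) * MvPolynomial.coeff (Finsupp.single 0 5 + Finsupp.single 1 0) P := by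
    linear_combination ((-17546257553 : ℝ)/9765630104832) * hPe0 + ((-85763286784 : ℝ)/32743216935) * hPe1 + ((-21879220464 : ℝ)/6660586009) * hPe2 + ((-151819219937 : ℝ)/1943161092288) * hPe3 + ((506366255493 : ℝ)/12369659731) * hPe4 + ((73427681640625 : ℝ)/5751220119183) * hPe5 + ((41859147213 : ℝ)/9118235392) * hPe6 + ((-1466286843 : ℝ)/1302605056) * hPe7 + ((-859779964288 : ℝ)/28713282543) * hPe8 + ((-5926900480000 : ℝ)/46624102063) * hPe9 + ((2669314865877 : ℝ)/232372530068) * hPe10 + ((31362787584 : ℝ)/391799177) * hPe11 + ((378083285778831 : ℝ)/7595490081536) * hPe12 + ((17885154375 : ℝ)/1643521223) * hPe13 + ((-59029390416861 : ℝ)/1228682219072) * hPe14 + ((-1823221632 : ℝ)/1185574133) * hPe15 + ((-906250247 : ℝ)/162708601077) * hPe16 + ((28548508431 : ℝ)/8726436215) * hPe17 + ((-5691587161699 : ℝ)/2770579894500) * Zp15 + ((3815556564299 : ℝ)/2770579894500) * Zp24 + ((181625677818328001 : ℝ)/96000593344425000) * Zp25 + ((-7804553820697 : ℝ)/8311739683500)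 * Zp33 + ((-17856132294136397 : ℝ)/12000074168053125) * Zp34 + ((-31237548363935410004821 : ℝ)/13305682237537305000000) * Zp35 + ((17944253299991 : ℝ)/24935219050500) * Zp42 + ((289339797365663053 : ℝ)/288001780033275000) * Zp43 + ((7087515216748309712207 : ℝ)/4435227412512435000000) * Zp44 + ((227044655004885092784508601 : ℝ)/115260472382666904562500000) * Zp45 + ((-18946825653149 : ℝ)/37402828575750) * Zp51 + ((-301738370995135117 : ℝ)/432002670049912500) * Zp52 + ((-39393574133167308687763 : ℝ)/39917046712611915000000) * Zp53 + ((-611154642368691735630543229 : ℝ)/461041889530667618250000000) * Zp54 + ((-106554000914731184909674842633859 : ℝ)/63900405888950531889450000000000) * Zp55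
  have pvP22 : MvPolynomial.coeff (Finsupp.single 0 2 + Finsupp.single 1 2) P = ((2519439 : ℝ)/5088301) * MvPolynomial.coeff (Finsupp.single 0 3 + Finsupp.single 1 2) P + ((1370809 : ℝ)/15264903) * MvPolynomial.coeff (Finsupp.single 0 4 + Finsupp.single 1 1) P + ((-12472995478 : ℝ)/18272088891) * MvPolynomial.coeff (Finsupp.single 0 5 + Finsupp.single 1 0) P := by
    linear_combination ((32609679685 : ℝ)/2441407526208) * hPe0 + ((-4900461928 : ℝ)/3638135215) * hPe1 + ((-507567245176 : ℝ)/6660586009) * hPe2 + ((7667045134859 : ℝ)/161930091024) * hPe3 + ((22024686510 : ℝ)/951512287) * hPe4 + ((1997294037109375 : ℝ)/5751220119183) * hPe5 + ((-456650089857 : ℝ)/2279558848) * hPe6 + ((-663938397 : ℝ)/325651264) * hPe7 + ((-104611211096 : ℝ)/503741799) * hPe8 + ((-5710098115000 : ℝ)/46624102063) * hPe9 + ((162210180692241 : ℝ)/4647450601360) * hPe10 + ((97733189304 : ℝ)/1958995885) * hPe11 + ((1049823337966183 : ℝ)/5696617561152) * hPe12 + ((11899254375 : ℝ)/676744033) *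 hPe13 + ((-30358387539495 : ℝ)/307170554768) * hPe14 + ((-19141925400 : ℝ)/91289208241) * hPe15 + ((-8243178027 : ℝ)/144629867624) * hPe16 + ((122991192974 : ℝ)/26179308645) * hPe17 + ((-120263442449221 : ℝ)/25858745682000) * Zp15 + ((9999059856323 : ℝ)/12929372841000) * Zp24 + ((1686750422569516889 : ℝ)/896005537881300000) * Zp25 + ((-4482408869357 : ℝ)/8619581894000) * Zp33 + ((-363191671559919089 : ℝ)/896005537881300000) * Zp34 + ((-75211826799461414744761 : ℝ)/31046591887587045000000) * Zp35 + ((218857552747 : ℝ)/19394059261500) * Zp42 + ((488800008116721289 : ℝ)/896005537881300000) * Zp43 + ((73492732880416129961119 : ℝ)/124186367550348180000000) * Zp44 + ((319718749086024439416344573 : ℝ)/195593528891798383500000000) * Zp45 + ((-41094505639289 : ℝ)/232728711138000) * Zp51 + ((-480772753481345467 : ℝ)/2688016613643900000) * Zp52 + ((-3869521475448629174483 : ℝ)/6899242641686010000000) * Zp53 + ((-42934934467712653269216799 : ℝ)/97796764445899191750000000) * Zp54 + ((-877538906146109202769039375973851 : ℝ)/596403788296871630968200000000000) * Zp55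
  have pvP23 : MvPolynomial.coeff (Finsupp.single 0 2 + Finsupp.single 1 3) P = ((11662966 : ℝ)/15264903) * MvPolynomial.coeff (Finsupp.single 0 3 + Finsupp.single 1 2) P + ((-21513911 : ℝ)/45794709) * MvPolynomial.coeff (Finsupp.single 0 4 + Finsupp.single 1 1) P + ((8975380 : ℝ)/870099471) * MvPolynomial.coeff (Finsupp.single 0 5 + Finsupp.single 1 0) P := by
    linear_combination ((-218136259 : ℝ)/16608214464) * hPe0 + ((21519410464 : ℝ)/10914405645) * hPe1 + ((-221733418560 : ℝ)/6660586009) * hPe2 + ((273484202299 : ℝ)/20241261378) * hPe3 + ((-249556190544 : ℝ)/12369659731) * hPe4 + ((35832523437500 : ℝ)/273867624723) * hPe5 + ((-18994157721 : ℝ)/407064080) * hPe6 + ((-39516939 : ℝ)/81412816) * hPe7 + ((-853147582304 : ℝ)/9571094181) * hPe8 + ((1523943390000 : ℝ)/46624102063) * hPe9 + ((24000715448919 : ℝ)/2655686057920) * hPe10 + ((-411442762464 : ℝ)/13712971195) * hPe11 + ((1174699810295 : ℝ)/38752500416) * hPe12 + ((160465657500 : ℝ)/11504648561) * hPe13 +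 ((-833708457 : ℝ)/71236214) * hPe14 + ((-214247835936 : ℝ)/91289208241) * hPe15 + ((12597804499 : ℝ)/315556074816) * hPe16 + ((366925040 : ℝ)/249326749) * hPe17 + ((3000589226991 : ℝ)/1077447736750) * Zp15 + ((-693439325441 : ℝ)/1077447736750) * Zp24 + ((-17319040553283103 : ℝ)/6787920741525000) * Zp25 + ((9260696589269 : ℝ)/9697029630750) * Zp33 + ((43513394165451143 : ℝ)/40727524449150000) * Zp34 + ((3533336358715537380221 : ℝ)/1293607995316126875000) * Zp35 + ((-18543437648707 : ℝ)/29091088892250) * Zp42 + ((-8134133349745219 : ℝ)/7636410834215625) * Zp43 + ((-7620553505057946120251 : ℝ)/7761647971896761250000) * Zp44 + ((-1598764322149997080486177439 : ℝ)/717176272603260739500000000) * Zp45 + ((37002476514821 : ℝ)/87273266676750) * Zp51 + ((229847371680555737 : ℝ)/366547720042350000) * Zp52 + ((10045898787022052551889 : ℝ)/11642471957845141875000) * Zp53 + ((897809485770003914829080771 : ℝ)/1075764408904891109250000000) * Zp54 + ((46108650303976325085041651999711 : ℝ)/24850157845702984623675000000000) * Zp55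
  have pvP24 : MvPolynomial.coeff (Finsupp.single 0 2 + Finsupp.single 1 4) P = (0 : ℝ) := by
    linear_combination (1 : ℝ) * Zp24
  have pvP25 : MvPolynomial.coeff (Finsupp.single 0 2 + Finsupp.single 1 5) P = (0 : ℝ) := by
    linear_combination (1 : ℝ) * Zp25
  have pvP30 : MvPolynomial.coeff (Finsupp.single 0 3 + Finsupp.single 1 0) P = ((-565 : ℝ)/2052) * MvPolynomial.coeff (Finsupp.single 0 5 + Finsupp.single 1 0) P := by
    linear_combination ((-84 : ℝ)/17) * hPe2 + ((27 : ℝ)/8) * hPe6 + ((130321 : ℝ)/6664) * hPe12 + ((-2187 : ℝ)/98) * hPe14 + ((212 : ℝ)/49) * hPe17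
  have pvP31 : MvPolynomial.coeff (Finsupp.single 0 3 + Finsupp.single 1 1) P = ((-1876616 : ℝ)/15264903) * MvPolynomial.coeff (Finsupp.single 0 3 + Finsupp.single 1 2) P + ((69906557 : ℝ)/91589418) * MvPolynomial.coeff (Finsupp.single 0 4 + Finsupp.single 1 1) P + ((-18488739922 : ℝ)/18272088891) * MvPolynomial.coeff (Finsupp.single 0 5 + Finsupp.single 1 0) P := by
    linear_combination ((25991098507 : ℝ)/8138025087360) * hPe0 + ((-13093354176 : ℝ)/3638135215) * hPe1 + ((-421048239960 : ℝ)/6660586009) * hPe2 + ((2555467738285 : ℝ)/107953394016) * hPe3 + ((2989339150329 : ℝ)/61848298655) * hPe4 + ((707402359375000 : ℝ)/1917073373061) * hPe5 + ((-4327737616989 : ℝ)/22795588480) * hPe6 + ((-962701425 : ℝ)/651302528) * hPe7 + ((-44412831680 : ℝ)/167913933) * hPe8 + ((-7127371560000 : ℝ)/46624102063) * hPe9 + ((1138274251983 : ℝ)/58093132517) * hPe10 + ((4650948288 : ℝ)/55971311) * hPe11 + ((863229893588717 : ℝ)/3797745040768) * hPe12 + ((60999075000 : ℝ)/1643521223)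 * hPe13 + ((-84350943304911 : ℝ)/614341109536) * hPe14 + ((-47308821696 : ℝ)/13041315463) * hPe15 + ((-942721437 : ℝ)/36157466906) * hPe16 + ((72870032903 : ℝ)/8726436215) * hPe17 + ((-732407674479 : ℝ)/153921105250) * Zp15 + ((560863039631 : ℝ)/230881657875) * Zp24 + ((16188814568537491 : ℝ)/5333366296912500) * Zp25 + ((-2184980809261 : ℝ)/1385289947250) * Zp33 + ((-31981531086728873 : ℝ)/16000098890737500) * Zp34 + ((-26777574899581412267 : ℝ)/6844486747704375000) * Zp35 + ((1955102917354 : ℝ)/2077934920875) * Zp42 + ((69355071806035819 : ℝ)/48000296672212500) * Zp43 + ((4927706994129586577783 : ℝ)/2217613706256217500000) * Zp44 + ((3483571890112090269377387 : ℝ)/1164247195784514187500000) * Zp45 + ((-21230585709173 : ℝ)/24935219050500) * Zp51 + ((-128329882485905057 : ℝ)/144000890016637500) * Zp52 + ((-4771254841979505857837 : ℝ)/3326420559384326250000) * Zp53 + ((-3050200534335730142284543 : ℝ)/1746370793676771281250000) * Zp54 + ((-3047560330318602681310439339723 : ℝ)/1183340849795380220175000000000) * Zp55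
  have pvP33 : MvPolynomial.coeff (Finsupp.single 0 3 + Finsupp.single 1 3) P = (0 : ℝ) := by
    linear_combination (1 : ℝ) * Zp33
  have pvP34 : MvPolynomial.coeff (Finsupp.single 0 3 + Finsupp.single 1 4) P = (0 : ℝ) := by
    linear_combination (1 : ℝ) * Zp34
  have pvP35 : MvPolynomial.coeff (Finsupp.single 0 3 + Finsupp.single 1 5) P = (0 : ℝ) := by
    linear_combination (1 : ℝ) * Zp35
  have pvP40 : MvPolynomial.coeff (Finsupp.single 0 4 + Finsupp.single 1 0) P = ((47 : ℝ)/171) * MvPolynomial.coeff (Finsupp.single 0 5 + Finsupp.single 1 0) P := by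
    linear_combination ((4104 : ℝ)/187) * hPe2 + ((-4617 : ℝ)/80) * hPe6 + ((1172889 : ℝ)/13328) * hPe12 + ((-124659 : ℝ)/2156) * hPe14 + ((1368 : ℝ)/245) * hPe17
  have pvP42 : MvPolynomial.coeff (Finsupp.single 0 4 + Finsupp.single 1 2) P = (0 : ℝ) := by
    linear_combination (1 : ℝ) * Zp42
  have pvP43 : MvPolynomial.coeff (Finsupp.single 0 4 + Finsupp.single 1 3) P = (0 : ℝ) := by
    linear_combination (1 : ℝ) * Zp43
  have pvP44 : MvPolynomial.coeff (Finsupp.single 0 4 + Finsupp.single 1 4) P = (0 : ℝ) := by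
    linear_combination (1 : ℝ) * Zp44
  have pvP45 : MvPolynomial.coeff (Finsupp.single 0 4 + Finsupp.single 1 5) P = (0 : ℝ) := by
    linear_combination (1 : ℝ) * Zp45
  have pvP51 : MvPolynomial.coeff (Finsupp.single 0 5 + Finsupp.single 1 1) P = (0 : ℝ) := by
    linear_combination (1 : ℝ) * Zp51
  have pvP52 : MvPolynomial.coeff (Finsupp.single 0 5 + Finsupp.single 1 2) P = (0 : ℝ) := by
    linear_combination (1 : ℝ) * Zp52
  have pvP53 : MvPolynomial.coeff (Finsupp.single 0 5 + Finsupp.single 1 3) P = (0 : ℝ) := by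
    linear_combination (1 : ℝ) * Zp53
  have pvP54 : MvPolynomial.coeff (Finsupp.single 0 5 + Finsupp.single 1 4) P = (0 : ℝ) := by
    linear_combination (1 : ℝ) * Zp54
  have pvP55 : MvPolynomial.coeff (Finsupp.single 0 5 + Finsupp.single 1 5) P = (0 : ℝ) := by
    linear_combination (1 : ℝ) * Zp55
  exact ⟨pvP00, pvP01, pvP02, pvP03, pvP04, pvP05, pvP10, pvP11, pvP12, pvP13, pvP14, pvP15, pvP20, pvP21, pvP22, pvP23, pvP24, pvP25, pvP30, pvP31, pvP33, pvP34, pvP35, pvP40, pvP42, pvP43, pvP44, pvP45, pvP51, pvP52, pvP53, pvP54, pvP55⟩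

set_option maxHeartbeats 0 in
/-- **Proposition.** For the perturbed Ziegler arrangement `Z₂`: every polynomial
vector field `(P, Q)` with `deg P ≤ 5`, `deg Q ≤ 5` fixing every line of `Z₂` is
zero (`D_i(Z₂) = ∅` for `1 ≤ i ≤ 5`), and there is a nonzero polynomial vector
field of degree `6` fixing every line of `Z₂` (`D_6(Z₂) ≠ ∅`). -/
theorem ziegler2_derivations :
    (∀ P Q : MvPolynomial (Fin 2) ℝ, P.totalDegree ≤ 5 → Q.totalDegree ≤ 5 →
        (∀ L ∈ Ziegler2, InvLine P Q L) → P = 0 ∧ Q = 0) ∧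
    (∃ P Q : MvPolynomial (Fin 2) ℝ, (P ≠ 0 ∨ Q ≠ 0) ∧
        max P.totalDegree Q.totalDegree = 6 ∧ ∀ L ∈ Ziegler2, InvLine P Q L) := by
  constructor
  · intro P Q hP hQ hInv
    have hL1 := invLine_pt (P := P) (Q := Q) (by norm_num) (hInv (lineSet (0) (1) (0)) (by simp [Ziegler2]))
    have hL2 := invLine_pt (P := P) (Q := Q) (by norm_num) (hInv (lineSet (2) (2) (1)) (by simp [Ziegler2]))
    have hL3 := invLine_pt (P := P) (Q := Q) (by norm_num) (hInv (lineSet (3) (1) (1)) (by simp [Ziegler2]))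
    have hL4 := invLine_pt (P := P) (Q := Q) (by norm_num) (hInv (lineSet (8) (-1) (4)) (by simp [Ziegler2]))
    have hL5 := invLine_pt (P := P) (Q := Q) (by norm_num) (hInv (lineSet (9) (3) (-1)) (by simp [Ziegler2]))
    have hL6 := invLine_pt (P := P) (Q := Q) (by norm_num) (hInv (lineSet (21) (-4) (7)) (by simp [Ziegler2]))
    have hL7 := invLine_pt (P := P) (Q := Q) (by norm_num) (hInv (lineSet (19) (4) (1)) (by simp [Ziegler2]))
    have hL8 := invLine_pt (P := P) (Q := Q) (by norm_num) (hInv (lineSet (10) (10) (-5)) (by simp [Ziegler2]))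
    have tA0 := hL4 ((-9 : ℝ)/11) ((-28 : ℝ)/11) (by norm_num)
    have tB0 := hL6 ((-9 : ℝ)/11) ((-28 : ℝ)/11) (by norm_num)
    have hPe0 : pev P (((-9 : ℝ)/11), ((-28 : ℝ)/11)) = 0 := by linarith
    have hQe0 : pev Q (((-9 : ℝ)/11), ((-28 : ℝ)/11)) = 0 := by linarith
    clear tA0 tB0
    have tA1 := hL3 ((-3 : ℝ)/4) ((5 : ℝ)/4) (by norm_num)
    have tB1 := hL8 ((-3 : ℝ)/4) ((5 : ℝ)/4) (by norm_num)
    have hPe1 : pev P (((-3 : ℝ)/4), ((5 : ℝ)/4)) = 0 := by linarith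
    have hQe1 : pev Q (((-3 : ℝ)/4), ((5 : ℝ)/4)) = 0 := by linarith
    clear tA1 tB1
    have tA2 := hL1 ((-1 : ℝ)/2) (0 : ℝ) (by norm_num)
    have tB2 := hL2 ((-1 : ℝ)/2) (0 : ℝ) (by norm_num)
    have hPe2 : pev P (((-1 : ℝ)/2), (0 : ℝ)) = 0 := by linarith
    have hQe2 : pev Q (((-1 : ℝ)/2), (0 : ℝ)) = 0 := by linarith
    clear tA2 tB2
    have tA3 := hL3 ((-5 : ℝ)/11) ((4 : ℝ)/11) (by norm_num)
    have tB3 := hL4 ((-5 : ℝ)/11) ((4 : ℝ)/11) (by norm_num)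
    have hPe3 : pev P (((-5 : ℝ)/11), ((4 : ℝ)/11)) = 0 := by linarith
    have hQe3 : pev Q (((-5 : ℝ)/11), ((4 : ℝ)/11)) = 0 := by linarith
    clear tA3 tB3
    have tA4 := hL4 ((-7 : ℝ)/18) ((8 : ℝ)/9) (by norm_num)
    have tB4 := hL8 ((-7 : ℝ)/18) ((8 : ℝ)/9) (by norm_num)
    have hPe4 : pev P (((-7 : ℝ)/18), ((8 : ℝ)/9)) = 0 := by linarith
    have hQe4 : pev Q (((-7 : ℝ)/18), ((8 : ℝ)/9)) = 0 := by linarith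
    clear tA4 tB4
    have tA5 := hL2 ((-9 : ℝ)/25) ((-7 : ℝ)/50) (by norm_num)
    have tB5 := hL6 ((-9 : ℝ)/25) ((-7 : ℝ)/50) (by norm_num)
    have hPe5 : pev P (((-9 : ℝ)/25), ((-7 : ℝ)/50)) = 0 := by linarith
    have hQe5 : pev Q (((-9 : ℝ)/25), ((-7 : ℝ)/50)) = 0 := by linarith
    clear tA5 tB5
    have tA6 := hL1 ((-1 : ℝ)/3) (0 : ℝ) (by norm_num)
    have tB6 := hL3 ((-1 : ℝ)/3) (0 : ℝ) (by norm_num)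
    have hPe6 : pev P (((-1 : ℝ)/3), (0 : ℝ)) = 0 := by linarith
    have hQe6 : pev Q (((-1 : ℝ)/3), (0 : ℝ)) = 0 := by linarith
    clear tA6 tB6
    have tA7 := hL4 ((-1 : ℝ)/3) ((4 : ℝ)/3) (by norm_num)
    have tB7 := hL5 ((-1 : ℝ)/3) ((4 : ℝ)/3) (by norm_num)
    have hPe7 : pev P (((-1 : ℝ)/3), ((4 : ℝ)/3)) = 0 := by linarith
    have hQe7 : pev Q (((-1 : ℝ)/3), ((4 : ℝ)/3)) = 0 := by linarith
    clear tA7 tB7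
    have tA8 := hL2 ((-1 : ℝ)/4) ((-1 : ℝ)/4) (by norm_num)
    have tB8 := hL3 ((-1 : ℝ)/4) ((-1 : ℝ)/4) (by norm_num)
    have hPe8 : pev P (((-1 : ℝ)/4), ((-1 : ℝ)/4)) = 0 := by linarith
    have hQe8 : pev Q (((-1 : ℝ)/4), ((-1 : ℝ)/4)) = 0 := by linarith
    clear tA8 tB8
    have tA9 := hL6 ((-1 : ℝ)/5) ((7 : ℝ)/10) (by norm_num)
    have tB9 := hL7 ((-1 : ℝ)/5) ((7 : ℝ)/10) (by norm_num)
    have hPe9 : pev P (((-1 : ℝ)/5), ((7 : ℝ)/10)) = 0 := by linarith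
    have hQe9 : pev Q (((-1 : ℝ)/5), ((7 : ℝ)/10)) = 0 := by linarith
    clear tA9 tB9
    have tA10 := hL5 ((-17 : ℝ)/99) ((28 : ℝ)/33) (by norm_num)
    have tB10 := hL6 ((-17 : ℝ)/99) ((28 : ℝ)/33) (by norm_num)
    have hPe10 : pev P (((-17 : ℝ)/99), ((28 : ℝ)/33)) = 0 := by linarith
    have hQe10 : pev Q (((-17 : ℝ)/99), ((28 : ℝ)/33)) = 0 := by linarith
    clear tA10 tB10
    have tA11 := hL5 ((-1 : ℝ)/12) ((7 : ℝ)/12) (by norm_num)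
    have tB11 := hL8 ((-1 : ℝ)/12) ((7 : ℝ)/12) (by norm_num)
    have hPe11 : pev P (((-1 : ℝ)/12), ((7 : ℝ)/12)) = 0 := by linarith
    have hQe11 : pev Q (((-1 : ℝ)/12), ((7 : ℝ)/12)) = 0 := by linarith
    clear tA11 tB11
    have tA12 := hL1 ((-1 : ℝ)/19) (0 : ℝ) (by norm_num)
    have tB12 := hL7 ((-1 : ℝ)/19) (0 : ℝ) (by norm_num)
    have hPe12 : pev P (((-1 : ℝ)/19), (0 : ℝ)) = 0 := by linarith
    have hQe12 : pev Q (((-1 : ℝ)/19), (0 : ℝ)) = 0 := by linarith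
    clear tA12 tB12
    have tA13 := hL2 ((1 : ℝ)/15) ((-17 : ℝ)/30) (by norm_num)
    have tB13 := hL7 ((1 : ℝ)/15) ((-17 : ℝ)/30) (by norm_num)
    have hPe13 : pev P (((1 : ℝ)/15), ((-17 : ℝ)/30)) = 0 := by linarith
    have hQe13 : pev Q (((1 : ℝ)/15), ((-17 : ℝ)/30)) = 0 := by linarith
    clear tA13 tB13
    have tA14 := hL1 ((1 : ℝ)/9) (0 : ℝ) (by norm_num)
    have tB14 := hL5 ((1 : ℝ)/9) (0 : ℝ) (by norm_num)
    have hPe14 : pev P (((1 : ℝ)/9), (0 : ℝ)) = 0 := by linarith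
    have hQe14 : pev Q (((1 : ℝ)/9), (0 : ℝ)) = 0 := by linarith
    clear tA14 tB14
    have tA15 := hL2 ((5 : ℝ)/12) ((-11 : ℝ)/12) (by norm_num)
    have tB15 := hL5 ((5 : ℝ)/12) ((-11 : ℝ)/12) (by norm_num)
    have hPe15 : pev P (((5 : ℝ)/12), ((-11 : ℝ)/12)) = 0 := by linarith
    have hQe15 : pev Q (((5 : ℝ)/12), ((-11 : ℝ)/12)) = 0 := by linarith
    clear tA15 tB15
    have tA16 := hL3 ((3 : ℝ)/7) ((-16 : ℝ)/7) (by norm_num)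
    have tB16 := hL7 ((3 : ℝ)/7) ((-16 : ℝ)/7) (by norm_num)
    have hPe16 : pev P (((3 : ℝ)/7), ((-16 : ℝ)/7)) = 0 := by linarith
    have hQe16 : pev Q (((3 : ℝ)/7), ((-16 : ℝ)/7)) = 0 := by linarith
    clear tA16 tB16
    have tA17 := hL1 ((1 : ℝ)/2) (0 : ℝ) (by norm_num)
    have tB17 := hL8 ((1 : ℝ)/2) (0 : ℝ) (by norm_num)
    have hPe17 : pev P (((1 : ℝ)/2), (0 : ℝ)) = 0 := by linarith
    have hQe17 : pev Q (((1 : ℝ)/2), (0 : ℝ)) = 0 := by linarith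
    clear tA17 tB17
    have E1 := hL1 (10 : ℝ) (0 : ℝ) (by norm_num)
    have E2 := hL2 (10 : ℝ) ((-21 : ℝ)/2) (by norm_num)
    have E3 := hL3 (10 : ℝ) (-31 : ℝ) (by norm_num)
    have E4 := hL4 (10 : ℝ) (84 : ℝ) (by norm_num)
    have E5 := hL5 (10 : ℝ) ((-89 : ℝ)/3) (by norm_num)
    have E6 := hL6 (10 : ℝ) ((217 : ℝ)/4) (by norm_num)
    have E7 := hL7 (10 : ℝ) ((-191 : ℝ)/4) (by norm_num)
    have E8 := hL8 (10 : ℝ) ((-19 : ℝ)/2) (by norm_num)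
    obtain ⟨pvP00, pvP01, pvP02, pvP03, pvP04, pvP05, pvP10, pvP11, pvP12, pvP13, pvP14, pvP15, pvP20, pvP21, pvP22, pvP23, pvP24, pvP25, pvP30, pvP31, pvP33, pvP34, pvP35, pvP40, pvP42, pvP43, pvP44, pvP45, pvP51, pvP52, pvP53, pvP54, pvP55⟩ := pv_rel P hP hPe0 hPe1 hPe2 hPe3 hPe4 hPe5 hPe6 hPe7 hPe8 hPe9 hPe10 hPe11 hPe12 hPe13 hPe14 hPe15 hPe16 hPe17
    obtain ⟨pvQ00, pvQ01, pvQ02, pvQ03, pvQ04, pvQ05, pvQ10, pvQ11, pvQ12, pvQ13, pvQ14, pvQ15, pvQ20, pvQ21, pvQ22, pvQ23, pvQ24, pvQ25, pvQ30, pvQ31, pvQ33, pvQ34, pvQ35, pvQ40, pvQ42, pvQ43, pvQ44, pvQ45, pvQ51, pvQ52, pvQ53, pvQ54, pvQ55⟩ := pv_rel Q hQ hQe0 hQe1 hQe2 hQe3 hQe4 hQe5 hQe6 hQe7 hQe8 hQe9 hQe10 hQe11 hQe12 hQe13 hQe14 hQe15 hQe16 hQe17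
    rw [expand5 P hP] at hPe0 hPe1 hPe2 hPe3 hPe4 hPe5 hPe6 hPe7 hPe8 hPe9 hPe10 hPe11 hPe12 hPe13 hPe14 hPe15 hPe16 hPe17
    rw [expand5 Q hQ] at hQe0 hQe1 hQe2 hQe3 hQe4 hQe5 hQe6 hQe7 hQe8 hQe9 hQe10 hQe11 hQe12 hQe13 hQe14 hQe15 hQe16 hQe17
    rw [expand5 P hP, expand5 Q hQ] at E1 E2 E3 E4 E5 E6 E7 E8
    simp only [Finset.sum_range_succ, Finset.sum_range_zero, zero_add] at hPe0 hPe1 hPe2 hPe3 hPe4 hPe5 hPe6 hPe7 hPe8 hPe9 hPe10 hPe11 hPe12 hPe13 hPe14 hPe15 hPe16 hPe17 hQe0 hQe1 hQe2 hQe3 hQe4 hQe5 hQe6 hQe7 hQe8 hQe9 hQe10 hQe11 hQe12 hQe13 hQe14 hQe15 hQe16 hQe17 E1 E2 E3 E4 E5 E6 E7 E8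
    have Zp15 := coeff_high P hP 1 5 (by norm_num)
    have Zq15 := coeff_high Q hQ 1 5 (by norm_num)
    have Zp24 := coeff_high P hP 2 4 (by norm_num)
    have Zq24 := coeff_high Q hQ 2 4 (by norm_num)
    have Zp25 := coeff_high P hP 2 5 (by norm_num)
    have Zq25 := coeff_high Q hQ 2 5 (by norm_num)
    have Zp33 := coeff_high P hP 3 3 (by norm_num)
    have Zq33 := coeff_high Q hQ 3 3 (by norm_num)
    have Zp34 := coeff_high P hP 3 4 (by norm_num)
    have Zq34 := coeff_high Q hQ 3 4 (by norm_num)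
    have Zp35 := coeff_high P hP 3 5 (by norm_num)
    have Zq35 := coeff_high Q hQ 3 5 (by norm_num)
    have Zp42 := coeff_high P hP 4 2 (by norm_num)
    have Zq42 := coeff_high Q hQ 4 2 (by norm_num)
    have Zp43 := coeff_high P hP 4 3 (by norm_num)
    have Zq43 := coeff_high Q hQ 4 3 (by norm_num)
    have Zp44 := coeff_high P hP 4 4 (by norm_num)
    have Zq44 := coeff_high Q hQ 4 4 (by norm_num)
    have Zp45 := coeff_high P hP 4 5 (by norm_num)
    have Zq45 := coeff_high Q hQ 4 5 (by norm_num)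
    have Zp51 := coeff_high P hP 5 1 (by norm_num)
    have Zq51 := coeff_high Q hQ 5 1 (by norm_num)
    have Zp52 := coeff_high P hP 5 2 (by norm_num)
    have Zq52 := coeff_high Q hQ 5 2 (by norm_num)
    have Zp53 := coeff_high P hP 5 3 (by norm_num)
    have Zq53 := coeff_high Q hQ 5 3 (by norm_num)
    have Zp54 := coeff_high P hP 5 4 (by norm_num)
    have Zq54 := coeff_high Q hQ 5 4 (by norm_num)
    have Zp55 := coeff_high P hP 5 5 (by norm_num)
    have Zq55 := coeff_high Q hQ 5 5 (by norm_num)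
    have FL1 : ((3688783 : ℝ)/36) * MvPolynomial.coeff (Finsupp.single 0 5 + Finsupp.single 1 0) Q = 0 := by
      linear_combination E1 + (-1 : ℝ) * pvQ00 + (-10 : ℝ) * pvQ10 + (-100 : ℝ) * pvQ20 + (-1000 : ℝ) * pvQ30 + (-10000 : ℝ) * pvQ40
    have FL2 : ((922155871420 : ℝ)/15264903) * MvPolynomial.coeff (Finsupp.single 0 3 + Finsupp.single 1 2) P + ((-11433968588035 : ℝ)/91589418) * MvPolynomial.coeff (Finsupp.single 0 4 + Finsupp.single 1 1) P + ((56886900481600 : ℝ)/290033157) * MvPolynomial.coeff (Finsupp.single 0 5 + Finsupp.single 1 0) P + ((922155871420 : ℝ)/15264903) * MvPolynomial.coeff (Finsupp.single 0 3 + Finsupp.single 1 2) Q + ((-11433968588035 : ℝ)/91589418) * MvPolynomial.coeff (Finsupp.single 0 4 + Finsupp.single 1 1) Q + ((56886900481600 : ℝ)/290033157) * MvPolynomial.coeff (Finsupp.single 0 5 + Finsupp.single 1 0) Q = 0 := by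
      linear_combination E2 + (-2 : ℝ) * pvP00 + (21 : ℝ) * pvP01 + ((-441 : ℝ)/2) * pvP02 + ((9261 : ℝ)/4) * pvP03 + ((-194481 : ℝ)/8) * pvP04 + ((4084101 : ℝ)/16) * pvP05 + (-20 : ℝ) * pvP10 + (210 : ℝ) * pvP11 + (-2205 : ℝ) * pvP12 + ((46305 : ℝ)/2) * pvP13 + ((-972405 : ℝ)/4) * pvP14 + ((20420505 : ℝ)/8) * pvP15 + (-200 : ℝ) * pvP20 + (2100 : ℝ) * pvP21 + (-22050 : ℝ) * pvP22 + (231525 : ℝ) * pvP23 + ((-4862025 : ℝ)/2) * pvP24 + ((102102525 : ℝ)/4) * pvP25 + (-2000 : ℝ) * pvP30 + (21000 : ℝ) * pvP31 + (2315250 : ℝ) * pvP33 + (-24310125 : ℝ) * pvP34 + ((510512625 : ℝ)/2) * pvP35 + (-20000 : ℝ) * pvP40 + (-2205000 : ℝ) * pvP42 + (23152500 : ℝ) * pvP43 + (-243101250 : ℝ) * pvP44 + (2552563125 : ℝ) * pvP45 + (2100000 : ℝ) * pvP51 + (-22050000 : ℝ) * pvP52 + (231525000 : ℝ) * pvP53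 + (-2431012500 : ℝ) * pvP54 + (25525631250 : ℝ) * pvP55 + (-2 : ℝ) * pvQ00 + (21 : ℝ) * pvQ01 + ((-441 : ℝ)/2) * pvQ02 + ((9261 : ℝ)/4) * pvQ03 + ((-194481 : ℝ)/8) * pvQ04 + ((4084101 : ℝ)/16) * pvQ05 + (-20 : ℝ) * pvQ10 + (210 : ℝ) * pvQ11 + (-2205 : ℝ) * pvQ12 + ((46305 : ℝ)/2) * pvQ13 + ((-972405 : ℝ)/4) * pvQ14 + ((20420505 : ℝ)/8) * pvQ15 + (-200 : ℝ) * pvQ20 + (2100 : ℝ) * pvQ21 + (-22050 : ℝ) * pvQ22 + (231525 : ℝ) * pvQ23 + ((-4862025 : ℝ)/2) * pvQ24 + ((102102525 : ℝ)/4) * pvQ25 + (-2000 : ℝ) * pvQ30 + (21000 : ℝ) * pvQ31 + (2315250 : ℝ) * pvQ33 + (-24310125 : ℝ) * pvQ34 + ((510512625 : ℝ)/2) * pvQ35 + (-20000 : ℝ) * pvQ40 + (-2205000 : ℝ) * pvQ42 + (23152500 : ℝ) * pvQ43 + (-243101250 : ℝ) * pvQ44 + (2552563125 : ℝ) * pvQ45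 + (2100000 : ℝ) * pvQ51 + (-22050000 : ℝ) * pvQ52 + (231525000 : ℝ) * pvQ53 + (-2431012500 : ℝ) * pvQ54 + (25525631250 : ℝ) * pvQ55
    have FL3 : ((-38228845218795 : ℝ)/20353204) * MvPolynomial.coeff (Finsupp.single 0 3 + Finsupp.single 1 2) P + ((30168965092695 : ℝ)/20353204) * MvPolynomial.coeff (Finsupp.single 0 4 + Finsupp.single 1 1) P + ((-571144413464515 : ℝ)/1353488066) * MvPolynomial.coeff (Finsupp.single 0 5 + Finsupp.single 1 0) P + ((-12742948406265 : ℝ)/20353204) * MvPolynomial.coeff (Finsupp.single 0 3 + Finsupp.single 1 2) Q + ((10056321697565 : ℝ)/20353204) * MvPolynomial.coeff (Finsupp.single 0 4 + Finsupp.single 1 1) Q + ((-571144413464515 : ℝ)/4060464198) * MvPolynomial.coeff (Finsupp.single 0 5 + Finsupp.single 1 0) Q = 0 := by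
      linear_combination E3 + (-3 : ℝ) * pvP00 + (93 : ℝ) * pvP01 + (-2883 : ℝ) * pvP02 + (89373 : ℝ) * pvP03 + (-2770563 : ℝ) * pvP04 + (85887453 : ℝ) * pvP05 + (-30 : ℝ) * pvP10 + (930 : ℝ) * pvP11 + (-28830 : ℝ) * pvP12 + (893730 : ℝ) * pvP13 + (-27705630 : ℝ) * pvP14 + (858874530 : ℝ) * pvP15 + (-300 : ℝ) * pvP20 + (9300 : ℝ) * pvP21 + (-288300 : ℝ) * pvP22 + (8937300 : ℝ) * pvP23 + (-277056300 : ℝ) * pvP24 + (8588745300 : ℝ) * pvP25 + (-3000 : ℝ) * pvP30 + (93000 : ℝ) * pvP31 + (89373000 : ℝ) * pvP33 + (-2770563000 : ℝ) * pvP34 + (85887453000 : ℝ) * pvP35 + (-30000 : ℝ) * pvP40 + (-28830000 : ℝ) * pvP42 + (893730000 : ℝ) * pvP43 + (-27705630000 : ℝ) * pvP44 + (858874530000 : ℝ) * pvP45 + (9300000 : ℝ) * pvP51 + (-288300000 : ℝ) * pvP52 + (8937300000 : ℝ) * pvP53 + (-277056300000 : ℝ) * pvP54 + (8588745300000 : ℝ)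 * pvP55 + (-1 : ℝ) * pvQ00 + (31 : ℝ) * pvQ01 + (-961 : ℝ) * pvQ02 + (29791 : ℝ) * pvQ03 + (-923521 : ℝ) * pvQ04 + (28629151 : ℝ) * pvQ05 + (-10 : ℝ) * pvQ10 + (310 : ℝ) * pvQ11 + (-9610 : ℝ) * pvQ12 + (297910 : ℝ) * pvQ13 + (-9235210 : ℝ) * pvQ14 + (286291510 : ℝ) * pvQ15 + (-100 : ℝ) * pvQ20 + (3100 : ℝ) * pvQ21 + (-96100 : ℝ) * pvQ22 + (2979100 : ℝ) * pvQ23 + (-92352100 : ℝ) * pvQ24 + (2862915100 : ℝ) * pvQ25 + (-1000 : ℝ) * pvQ30 + (31000 : ℝ) * pvQ31 + (29791000 : ℝ) * pvQ33 + (-923521000 : ℝ) * pvQ34 + (28629151000 : ℝ) * pvQ35 + (-10000 : ℝ) * pvQ40 + (-9610000 : ℝ) * pvQ42 + (297910000 : ℝ) * pvQ43 + (-9235210000 : ℝ) * pvQ44 + (286291510000 : ℝ) * pvQ45 + (3100000 : ℝ) * pvQ51 + (-96100000 : ℝ) * pvQ52 + (2979100000 : ℝ) * pvQ53 + (-92352100000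 : ℝ) * pvQ54 + (2862915100000 : ℝ) * pvQ55
    have FL4 : ((2405892914803840 : ℝ)/15264903) * MvPolynomial.coeff (Finsupp.single 0 3 + Finsupp.single 1 2) P + ((-14915539154830160 : ℝ)/45794709) * MvPolynomial.coeff (Finsupp.single 0 4 + Finsupp.single 1 1) P + ((-304494724234406090 : ℝ)/290033157) * MvPolynomial.coeff (Finsupp.single 0 5 + Finsupp.single 1 0) P + ((-300736614350480 : ℝ)/15264903) * MvPolynomial.coeff (Finsupp.single 0 3 + Finsupp.single 1 2) Q + ((1864442394353770 : ℝ)/45794709) * MvPolynomial.coeff (Finsupp.single 0 4 + Finsupp.single 1 1) Q + ((152247362117203045 : ℝ)/1160132628) * MvPolynomial.coeff (Finsupp.single 0 5 + Finsupp.single 1 0) Q = 0 := by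
      linear_combination E4 + (-8 : ℝ) * pvP00 + (-672 : ℝ) * pvP01 + (-56448 : ℝ) * pvP02 + (-4741632 : ℝ) * pvP03 + (-398297088 : ℝ) * pvP04 + (-33456955392 : ℝ) * pvP05 + (-80 : ℝ) * pvP10 + (-6720 : ℝ) * pvP11 + (-564480 : ℝ) * pvP12 + (-47416320 : ℝ) * pvP13 + (-3982970880 : ℝ) * pvP14 + (-334569553920 : ℝ) * pvP15 + (-800 : ℝ) * pvP20 + (-67200 : ℝ) * pvP21 + (-5644800 : ℝ) * pvP22 + (-474163200 : ℝ) * pvP23 + (-39829708800 : ℝ) * pvP24 + (-3345695539200 : ℝ) * pvP25 + (-8000 : ℝ) * pvP30 + (-672000 : ℝ) * pvP31 + (-4741632000 : ℝ) * pvP33 + (-398297088000 : ℝ) * pvP34 + (-33456955392000 : ℝ) * pvP35 + (-80000 : ℝ) * pvP40 + (-564480000 : ℝ) * pvP42 + (-47416320000 : ℝ) * pvP43 + (-3982970880000 : ℝ) * pvP44 + (-334569553920000 : ℝ) * pvP45 + (-67200000 : ℝ) * pvP51 + (-5644800000 : ℝ) * pvP52 + (-474163200000 : ℝ) * pvP53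 + (-39829708800000 : ℝ) * pvP54 + (-3345695539200000 : ℝ) * pvP55 + (1 : ℝ) * pvQ00 + (84 : ℝ) * pvQ01 + (7056 : ℝ) * pvQ02 + (592704 : ℝ) * pvQ03 + (49787136 : ℝ) * pvQ04 + (4182119424 : ℝ) * pvQ05 + (10 : ℝ) * pvQ10 + (840 : ℝ) * pvQ11 + (70560 : ℝ) * pvQ12 + (5927040 : ℝ) * pvQ13 + (497871360 : ℝ) * pvQ14 + (41821194240 : ℝ) * pvQ15 + (100 : ℝ) * pvQ20 + (8400 : ℝ) * pvQ21 + (705600 : ℝ) * pvQ22 + (59270400 : ℝ) * pvQ23 + (4978713600 : ℝ) * pvQ24 + (418211942400 : ℝ) * pvQ25 + (1000 : ℝ) * pvQ30 + (84000 : ℝ) * pvQ31 + (592704000 : ℝ) * pvQ33 + (49787136000 : ℝ) * pvQ34 + (4182119424000 : ℝ) * pvQ35 + (10000 : ℝ) * pvQ40 + (70560000 : ℝ) * pvQ42 + (5927040000 : ℝ) * pvQ43 + (497871360000 : ℝ) * pvQ44 + (41821194240000 : ℝ) * pvQ45 + (8400000 : ℝ) * pvQ51 + (705600000 : ℝ)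 * pvQ52 + (59270400000 : ℝ) * pvQ53 + (4978713600000 : ℝ) * pvQ54 + (418211942400000 : ℝ) * pvQ55
    have FL5 : ((-2729759854915555 : ℝ)/549536508) * MvPolynomial.coeff (Finsupp.single 0 3 + Finsupp.single 1 2) P + ((6462713898605965 : ℝ)/1648609524) * MvPolynomial.coeff (Finsupp.single 0 4 + Finsupp.single 1 1) P + ((-2759752050827255 : ℝ)/2472914286) * MvPolynomial.coeff (Finsupp.single 0 5 + Finsupp.single 1 0) P + ((-2729759854915555 : ℝ)/1648609524) * MvPolynomial.coeff (Finsupp.single 0 3 + Finsupp.single 1 2) Q + ((6462713898605965 : ℝ)/4945828572) * MvPolynomial.coeff (Finsupp.single 0 4 + Finsupp.single 1 1) Q + ((-2759752050827255 : ℝ)/7418742858) * MvPolynomial.coeff (Finsupp.single 0 5 + Finsupp.single 1 0) Q = 0 := by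
      linear_combination E5 + (-9 : ℝ) * pvP00 + (267 : ℝ) * pvP01 + (-7921 : ℝ) * pvP02 + ((704969 : ℝ)/3) * pvP03 + ((-62742241 : ℝ)/9) * pvP04 + ((5584059449 : ℝ)/27) * pvP05 + (-90 : ℝ) * pvP10 + (2670 : ℝ) * pvP11 + (-79210 : ℝ) * pvP12 + ((7049690 : ℝ)/3) * pvP13 + ((-627422410 : ℝ)/9) * pvP14 + ((55840594490 : ℝ)/27) * pvP15 + (-900 : ℝ) * pvP20 + (26700 : ℝ) * pvP21 + (-792100 : ℝ) * pvP22 + ((70496900 : ℝ)/3) * pvP23 + ((-6274224100 : ℝ)/9) * pvP24 + ((558405944900 : ℝ)/27) * pvP25 + (-9000 : ℝ) * pvP30 + (267000 : ℝ) * pvP31 + ((704969000 : ℝ)/3) * pvP33 + ((-62742241000 : ℝ)/9) * pvP34 + ((5584059449000 : ℝ)/27) * pvP35 + (-90000 : ℝ) * pvP40 + (-79210000 : ℝ) * pvP42 + ((7049690000 : ℝ)/3) * pvP43 + ((-627422410000 : ℝ)/9) * pvP44 + ((55840594490000 : ℝ)/27) * pvP45 + (26700000 : ℝ) * pvP51 +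 (-792100000 : ℝ) * pvP52 + ((70496900000 : ℝ)/3) * pvP53 + ((-6274224100000 : ℝ)/9) * pvP54 + ((558405944900000 : ℝ)/27) * pvP55 + (-3 : ℝ) * pvQ00 + (89 : ℝ) * pvQ01 + ((-7921 : ℝ)/3) * pvQ02 + ((704969 : ℝ)/9) * pvQ03 + ((-62742241 : ℝ)/27) * pvQ04 + ((5584059449 : ℝ)/81) * pvQ05 + (-30 : ℝ) * pvQ10 + (890 : ℝ) * pvQ11 + ((-79210 : ℝ)/3) * pvQ12 + ((7049690 : ℝ)/9) * pvQ13 + ((-627422410 : ℝ)/27) * pvQ14 + ((55840594490 : ℝ)/81) * pvQ15 + (-300 : ℝ) * pvQ20 + (8900 : ℝ) * pvQ21 + ((-792100 : ℝ)/3) * pvQ22 + ((70496900 : ℝ)/9) * pvQ23 + ((-6274224100 : ℝ)/27) * pvQ24 + ((558405944900 : ℝ)/81) * pvQ25 + (-3000 : ℝ) * pvQ30 + (89000 : ℝ) * pvQ31 + ((704969000 : ℝ)/9) * pvQ33 + ((-62742241000 : ℝ)/27) * pvQ34 + ((5584059449000 : ℝ)/81) * pvQ35 + (-30000 : ℝ)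 * pvQ40 + ((-79210000 : ℝ)/3) * pvQ42 + ((7049690000 : ℝ)/9) * pvQ43 + ((-627422410000 : ℝ)/27) * pvQ44 + ((55840594490000 : ℝ)/81) * pvQ45 + (8900000 : ℝ) * pvQ51 + ((-792100000 : ℝ)/3) * pvQ52 + ((70496900000 : ℝ)/9) * pvQ53 + ((-6274224100000 : ℝ)/27) * pvQ54 + ((558405944900000 : ℝ)/81) * pvQ55
    have FL6 : ((363795586409562615 : ℝ)/1302605056) * MvPolynomial.coeff (Finsupp.single 0 3 + Finsupp.single 1 2) P + ((-287095680877920915 : ℝ)/1302605056) * MvPolynomial.coeff (Finsupp.single 0 4 + Finsupp.single 1 1) P + ((-1441228742998946825 : ℝ)/3907815168) * MvPolynomial.coeff (Finsupp.single 0 5 + Finsupp.single 1 0) P + ((-17323599352836315 : ℝ)/325651264) * MvPolynomial.coeff (Finsupp.single 0 3 + Finsupp.single 1 2) Q + ((13671222898948615 : ℝ)/325651264) * MvPolynomial.coeff (Finsupp.single 0 4 + Finsupp.single 1 1) Q + ((205889820428420975 : ℝ)/2930861376) * MvPolynomial.coeff (Finsupp.single 0 5 + Finsupp.single 1 0) Q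 = 0 := by
      linear_combination E6 + (-21 : ℝ) * pvP00 + ((-4557 : ℝ)/4) * pvP01 + ((-988869 : ℝ)/16) * pvP02 + ((-214584573 : ℝ)/64) * pvP03 + ((-46564852341 : ℝ)/256) * pvP04 + ((-10104572957997 : ℝ)/1024) * pvP05 + (-210 : ℝ) * pvP10 + ((-22785 : ℝ)/2) * pvP11 + ((-4944345 : ℝ)/8) * pvP12 + ((-1072922865 : ℝ)/32) * pvP13 + ((-232824261705 : ℝ)/128) * pvP14 + ((-50522864789985 : ℝ)/512) * pvP15 + (-2100 : ℝ) * pvP20 + (-113925 : ℝ) * pvP21 + ((-24721725 : ℝ)/4) * pvP22 + ((-5364614325 : ℝ)/16) * pvP23 + ((-1164121308525 : ℝ)/64) * pvP24 + ((-252614323949925 : ℝ)/256) * pvP25 + (-21000 : ℝ) * pvP30 + (-1139250 : ℝ) * pvP31 + ((-26823071625 : ℝ)/8) * pvP33 + ((-5820606542625 : ℝ)/32) * pvP34 + ((-1263071619749625 : ℝ)/128) * pvP35 + (-210000 : ℝ) * pvP40 + (-618043125 : ℝ) * pvP42 + ((-134115358125 : ℝ)/4) * pvP43 + ((-29103032713125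 : ℝ)/16) * pvP44 + ((-6315358098748125 : ℝ)/64) * pvP45 + (-113925000 : ℝ) * pvP51 + (-6180431250 : ℝ) * pvP52 + ((-670576790625 : ℝ)/2) * pvP53 + ((-145515163565625 : ℝ)/8) * pvP54 + ((-31576790493740625 : ℝ)/32) * pvP55 + (4 : ℝ) * pvQ00 + (217 : ℝ) * pvQ01 + ((47089 : ℝ)/4) * pvQ02 + ((10218313 : ℝ)/16) * pvQ03 + ((2217373921 : ℝ)/64) * pvQ04 + ((481170140857 : ℝ)/256) * pvQ05 + (40 : ℝ) * pvQ10 + (2170 : ℝ) * pvQ11 + ((235445 : ℝ)/2) * pvQ12 + ((51091565 : ℝ)/8) * pvQ13 + ((11086869605 : ℝ)/32) * pvQ14 + ((2405850704285 : ℝ)/128) * pvQ15 + (400 : ℝ) * pvQ20 + (21700 : ℝ) * pvQ21 + (1177225 : ℝ) * pvQ22 + ((255457825 : ℝ)/4) * pvQ23 + ((55434348025 : ℝ)/16) * pvQ24 + ((12029253521425 : ℝ)/64) * pvQ25 + (4000 : ℝ) * pvQ30 + (217000 : ℝ) * pvQ31 + ((1277289125 : ℝ)/2) * pvQ33 + ((277171740125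 : ℝ)/8) * pvQ34 + ((60146267607125 : ℝ)/32) * pvQ35 + (40000 : ℝ) * pvQ40 + (117722500 : ℝ) * pvQ42 + (6386445625 : ℝ) * pvQ43 + ((1385858700625 : ℝ)/4) * pvQ44 + ((300731338035625 : ℝ)/16) * pvQ45 + (21700000 : ℝ) * pvQ51 + (1177225000 : ℝ) * pvQ52 + (63864456250 : ℝ) * pvQ53 + ((6929293503125 : ℝ)/2) * pvQ54 + ((1503656690178125 : ℝ)/8) * pvQ55
    have FL7 : ((-195074974224078151 : ℝ)/11723445504) * MvPolynomial.coeff (Finsupp.single 0 3 + Finsupp.single 1 2) P + ((562695911311943297 : ℝ)/35170336512) * MvPolynomial.coeff (Finsupp.single 0 4 + Finsupp.single 1 1) P + ((137399538058492115 : ℝ)/11723445504) * MvPolynomial.coeff (Finsupp.single 0 5 + Finsupp.single 1 0) P + ((-10267103906530429 : ℝ)/2930861376) * MvPolynomial.coeff (Finsupp.single 0 3 + Finsupp.single 1 2) Q + ((29615574279575963 : ℝ)/8792584128) * MvPolynomial.coeff (Finsupp.single 0 4 + Finsupp.single 1 1) Q + ((137399538058492115 : ℝ)/55686366144) * MvPolynomial.coeff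 (Finsupp.single 0 5 + Finsupp.single 1 0) Q = 0 := by
      linear_combination E7 + (-19 : ℝ) * pvP00 + ((3629 : ℝ)/4) * pvP01 + ((-693139 : ℝ)/16) * pvP02 + ((132389549 : ℝ)/64) * pvP03 + ((-25286403859 : ℝ)/256) * pvP04 + ((4829703137069 : ℝ)/1024) * pvP05 + (-190 : ℝ) * pvP10 + ((18145 : ℝ)/2) * pvP11 + ((-3465695 : ℝ)/8) * pvP12 + ((661947745 : ℝ)/32) * pvP13 + ((-126432019295 : ℝ)/128) * pvP14 + ((24148515685345 : ℝ)/512) * pvP15 + (-1900 : ℝ) * pvP20 + (90725 : ℝ) * pvP21 + ((-17328475 : ℝ)/4) * pvP22 + ((3309738725 : ℝ)/16) * pvP23 + ((-632160096475 : ℝ)/64) * pvP24 + ((120742578426725 : ℝ)/256) * pvP25 + (-19000 : ℝ) * pvP30 + (907250 : ℝ) * pvP31 + ((16548693625 : ℝ)/8) * pvP33 + ((-3160800482375 : ℝ)/32) * pvP34 + ((603712892133625 : ℝ)/128) * pvP35 + (-190000 : ℝ) * pvP40 + (-433211875 : ℝ) * pvP42 + ((82743468125 : ℝ)/4) * pvP43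 + ((-15804002411875 : ℝ)/16) * pvP44 + ((3018564460668125 : ℝ)/64) * pvP45 + (90725000 : ℝ) * pvP51 + (-4332118750 : ℝ) * pvP52 + ((413717340625 : ℝ)/2) * pvP53 + ((-79020012059375 : ℝ)/8) * pvP54 + ((15092822303340625 : ℝ)/32) * pvP55 + (-4 : ℝ) * pvQ00 + (191 : ℝ) * pvQ01 + ((-36481 : ℝ)/4) * pvQ02 + ((6967871 : ℝ)/16) * pvQ03 + ((-1330863361 : ℝ)/64) * pvQ04 + ((254194901951 : ℝ)/256) * pvQ05 + (-40 : ℝ) * pvQ10 + (1910 : ℝ) * pvQ11 + ((-182405 : ℝ)/2) * pvQ12 + ((34839355 : ℝ)/8) * pvQ13 + ((-6654316805 : ℝ)/32) * pvQ14 + ((1270974509755 : ℝ)/128) * pvQ15 + (-400 : ℝ) * pvQ20 + (19100 : ℝ) * pvQ21 + (-912025 : ℝ) * pvQ22 + ((174196775 : ℝ)/4) * pvQ23 + ((-33271584025 : ℝ)/16) * pvQ24 + ((6354872548775 : ℝ)/64) * pvQ25 + (-4000 : ℝ) * pvQ30 + (191000 : ℝ) * pvQ31 + ((870983875 : ℝ)/2)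 * pvQ33 + ((-166357920125 : ℝ)/8) * pvQ34 + ((31774362743875 : ℝ)/32) * pvQ35 + (-40000 : ℝ) * pvQ40 + (-91202500 : ℝ) * pvQ42 + (4354919375 : ℝ) * pvQ43 + ((-831789600625 : ℝ)/4) * pvQ44 + ((158871813719375 : ℝ)/16) * pvQ45 + (19100000 : ℝ) * pvQ51 + (-912025000 : ℝ) * pvQ52 + (43549193750 : ℝ) * pvQ53 + ((-4158948003125 : ℝ)/2) * pvQ54 + ((794359068596875 : ℝ)/8) * pvQ55
    have FL8 : ((14220554735750 : ℝ)/45794709) * MvPolynomial.coeff (Finsupp.single 0 3 + Finsupp.single 1 2) P + ((-352646187466375 : ℝ)/549536508) * MvPolynomial.coeff (Finsupp.single 0 4 + Finsupp.single 1 1) P + ((323198184980000 : ℝ)/320562963) * MvPolynomial.coeff (Finsupp.single 0 5 + Finsupp.single 1 0) P + ((14220554735750 : ℝ)/45794709) * MvPolynomial.coeff (Finsupp.single 0 3 + Finsupp.single 1 2) Q + ((-352646187466375 : ℝ)/549536508) * MvPolynomial.coeff (Finsupp.single 0 4 + Finsupp.single 1 1) Q + ((323198184980000 : ℝ)/320562963)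 * MvPolynomial.coeff (Finsupp.single 0 5 + Finsupp.single 1 0) Q = 0 := by
      linear_combination E8 + (-10 : ℝ) * pvP00 + (95 : ℝ) * pvP01 + ((-1805 : ℝ)/2) * pvP02 + ((34295 : ℝ)/4) * pvP03 + ((-651605 : ℝ)/8) * pvP04 + ((12380495 : ℝ)/16) * pvP05 + (-100 : ℝ) * pvP10 + (950 : ℝ) * pvP11 + (-9025 : ℝ) * pvP12 + ((171475 : ℝ)/2) * pvP13 + ((-3258025 : ℝ)/4) * pvP14 + ((61902475 : ℝ)/8) * pvP15 + (-1000 : ℝ) * pvP20 + (9500 : ℝ) * pvP21 + (-90250 : ℝ) * pvP22 + (857375 : ℝ) * pvP23 + ((-16290125 : ℝ)/2) * pvP24 + ((309512375 : ℝ)/4) * pvP25 + (-10000 : ℝ) * pvP30 + (95000 : ℝ) * pvP31 + (8573750 : ℝ) * pvP33 + (-81450625 : ℝ) * pvP34 + ((1547561875 : ℝ)/2) * pvP35 + (-100000 : ℝ) * pvP40 + (-9025000 : ℝ) * pvP42 + (85737500 : ℝ) * pvP43 + (-814506250 : ℝ) * pvP44 + (7737809375 : ℝ) * pvP45 + (9500000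 : ℝ) * pvP51 + (-90250000 : ℝ) * pvP52 + (857375000 : ℝ) * pvP53 + (-8145062500 : ℝ) * pvP54 + (77378093750 : ℝ) * pvP55 + (-10 : ℝ) * pvQ00 + (95 : ℝ) * pvQ01 + ((-1805 : ℝ)/2) * pvQ02 + ((34295 : ℝ)/4) * pvQ03 + ((-651605 : ℝ)/8) * pvQ04 + ((12380495 : ℝ)/16) * pvQ05 + (-100 : ℝ) * pvQ10 + (950 : ℝ) * pvQ11 + (-9025 : ℝ) * pvQ12 + ((171475 : ℝ)/2) * pvQ13 + ((-3258025 : ℝ)/4) * pvQ14 + ((61902475 : ℝ)/8) * pvQ15 + (-1000 : ℝ) * pvQ20 + (9500 : ℝ) * pvQ21 + (-90250 : ℝ) * pvQ22 + (857375 : ℝ) * pvQ23 + ((-16290125 : ℝ)/2) * pvQ24 + ((309512375 : ℝ)/4) * pvQ25 + (-10000 : ℝ) * pvQ30 + (95000 : ℝ) * pvQ31 + (8573750 : ℝ) * pvQ33 + (-81450625 : ℝ) * pvQ34 + ((1547561875 : ℝ)/2) * pvQ35 + (-100000 : ℝ) * pvQ40 + (-9025000 : ℝ) * pvQ42 + (85737500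 : ℝ) * pvQ43 + (-814506250 : ℝ) * pvQ44 + (7737809375 : ℝ) * pvQ45 + (9500000 : ℝ) * pvQ51 + (-90250000 : ℝ) * pvQ52 + (857375000 : ℝ) * pvQ53 + (-8145062500 : ℝ) * pvQ54 + (77378093750 : ℝ) * pvQ55
    have fzP32 : MvPolynomial.coeff (Finsupp.single 0 3 + Finsupp.single 1 2) P = 0 := by
      linear_combination ((1055261 : ℝ)/8830946502) * FL1 + ((-64502 : ℝ)/3509162325) * FL2 + ((367504 : ℝ)/41689035135) * FL3 + ((-106751 : ℝ)/5607657864270) * FL4 + ((-4283264 : ℝ)/283374035215425) * FL6 + ((-2790784 : ℝ)/1793673013335) * FL7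
    have fzP41 : MvPolynomial.coeff (Finsupp.single 0 4 + Finsupp.single 1 1) P = 0 := by
      linear_combination ((300494 : ℝ)/1471824417) * FL1 + ((-353072 : ℝ)/11463263595) * FL2 + ((213872 : ℝ)/13896345045) * FL3 + ((-28874 : ℝ)/934609644045) * FL4 + ((-114208 : ℝ)/3778320469539) * FL6 + ((-316768 : ℝ)/119578200889) * FL7
    have fzP50 : MvPolynomial.coeff (Finsupp.single 0 5 + Finsupp.single 1 0) P = 0 := by
      linear_combination ((-387 : ℝ)/7377566) * FL1 + ((7106 : ℝ)/909782825) * FL2 + ((-19152 : ℝ)/4632115015) * FL3 + ((19 : ℝ)/2697286130) * FL4 + ((288 : ℝ)/33819553075) * FL6 + ((60192 : ℝ)/85413000635) * FL7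
    have fzQ32 : MvPolynomial.coeff (Finsupp.single 0 3 + Finsupp.single 1 2) Q = 0 := by
      linear_combination ((-49487 : ℝ)/2943648834) * FL1 + ((-856 : ℝ)/221298525) * FL2 + ((-61268 : ℝ)/13896345045) * FL3 + ((53 : ℝ)/6467886810) * FL4 + ((-13696 : ℝ)/2552919236175) * FL6 + ((9088 : ℝ)/19286806595) * FL7
    have fzQ41 : MvPolynomial.coeff (Finsupp.single 0 4 + Finsupp.single 1 1) Q = 0 := by
      linear_combination ((-108698 : ℝ)/490608139) * FL1 + ((13262 : ℝ)/545869695) * FL2 + ((-2128 : ℝ)/107723605) * FL3 + ((1634 : ℝ)/44505221145) * FL4 + ((11168 : ℝ)/331431620135) * FL6 + ((55200 : ℝ)/17082600127) * FL7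
    have fzQ50 : MvPolynomial.coeff (Finsupp.single 0 5 + Finsupp.single 1 0) Q = 0 := by
      linear_combination ((36 : ℝ)/3688783) * FL1
    have fzP00 : MvPolynomial.coeff (Finsupp.single 0 0 + Finsupp.single 1 0) P = 0 := by
      linear_combination pvP00 + ((1 : ℝ)/2052) * fzP50
    have fzP01 : MvPolynomial.coeff (Finsupp.single 0 0 + Finsupp.single 1 1) P = 0 := by
      linear_combination pvP01 + ((23177 : ℝ)/137384127) * fzP32 + ((-1236161 : ℝ)/824304762) * fzP41 + ((-17850347 : ℝ)/36544177782) * fzP50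
    have fzP02 : MvPolynomial.coeff (Finsupp.single 0 0 + Finsupp.single 1 2) P = 0 := by
      linear_combination pvP02 + ((-10025357 : ℝ)/549536508) * fzP32 + ((23157979 : ℝ)/1648609524) * fzP41 + ((-81293815 : ℝ)/73088355564) * fzP50
    have fzP03 : MvPolynomial.coeff (Finsupp.single 0 0 + Finsupp.single 1 3) P = 0 := by
      linear_combination pvP03 + ((-202658 : ℝ)/137384127) * fzP32 + ((11241617 : ℝ)/824304762) * fzP41 + ((-16839080 : ℝ)/2610298413) * fzP50
    have fzP04 : MvPolynomial.coeff (Finsupp.single 0 0 + Finsupp.single 1 4) P = 0 := by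
      linear_combination pvP04 + ((9656117 : ℝ)/137384127) * fzP32 + ((-20868844 : ℝ)/412152381) * fzP41 + ((-10505953 : ℝ)/870099471) * fzP50
    have fzP05 : MvPolynomial.coeff (Finsupp.single 0 0 + Finsupp.single 1 5) P = 0 := by
      linear_combination pvP05 + ((-620840 : ℝ)/45794709) * fzP32 + ((559828 : ℝ)/137384127) * fzP41 + ((-126632728 : ℝ)/6090696297) * fzP50
    have fzP10 : MvPolynomial.coeff (Finsupp.single 0 1 + Finsupp.single 1 0) P = 0 := by
      linear_combination pvP10 + ((13 : ℝ)/2052) * fzP50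
    have fzP11 : MvPolynomial.coeff (Finsupp.single 0 1 + Finsupp.single 1 1) P = 0 := by
      linear_combination pvP11 + ((-12804827 : ℝ)/137384127) * fzP32 + ((53833577 : ℝ)/824304762) * fzP41 + ((-96906790 : ℝ)/6090696297) * fzP50
    have fzP12 : MvPolynomial.coeff (Finsupp.single 0 1 + Finsupp.single 1 2) P = 0 := by
      linear_combination pvP12 + ((-11310685 : ℝ)/183178836) * fzP32 + ((66041783 : ℝ)/549536508) * fzP41 + ((-1627075675 : ℝ)/10441193652) * fzP50
    have fzP13 : MvPolynomial.coeff (Finsupp.single 0 1 + Finsupp.single 1 3) P = 0 := by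
      linear_combination pvP13 + ((64292834 : ℝ)/137384127) * fzP32 + ((-221454875 : ℝ)/824304762) * fzP41 + ((-250814698 : ℝ)/2030232099) * fzP50
    have fzP14 : MvPolynomial.coeff (Finsupp.single 0 1 + Finsupp.single 1 4) P = 0 := by
      linear_combination pvP14 + ((1605349 : ℝ)/45794709) * fzP32 + ((-7390778 : ℝ)/137384127) * fzP41 + ((-58553485 : ℝ)/676744033) * fzP50
    have fzP20 : MvPolynomial.coeff (Finsupp.single 0 2 + Finsupp.single 1 0) P = 0 := by
      linear_combination pvP20 + ((-145 : ℝ)/2052) * fzP50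
    have fzP21 : MvPolynomial.coeff (Finsupp.single 0 2 + Finsupp.single 1 1) P = 0 := by
      linear_combination pvP21 + ((-12330094 : ℝ)/45794709) * fzP32 + ((85455931 : ℝ)/274768254) * fzP41 + ((-15375108565 : ℝ)/36544177782) * fzP50
    have fzP22 : MvPolynomial.coeff (Finsupp.single 0 2 + Finsupp.single 1 2) P = 0 := by
      linear_combination pvP22 + ((2519439 : ℝ)/5088301) * fzP32 + ((1370809 : ℝ)/15264903) * fzP41 + ((-12472995478 : ℝ)/18272088891) * fzP50
    have fzP23 : MvPolynomial.coeff (Finsupp.single 0 2 + Finsupp.single 1 3) P = 0 := by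
      linear_combination pvP23 + ((11662966 : ℝ)/15264903) * fzP32 + ((-21513911 : ℝ)/45794709) * fzP41 + ((8975380 : ℝ)/870099471) * fzP50
    have fzP30 : MvPolynomial.coeff (Finsupp.single 0 3 + Finsupp.single 1 0) P = 0 := by
      linear_combination pvP30 + ((-565 : ℝ)/2052) * fzP50
    have fzP31 : MvPolynomial.coeff (Finsupp.single 0 3 + Finsupp.single 1 1) P = 0 := by
      linear_combination pvP31 + ((-1876616 : ℝ)/15264903) * fzP32 + ((69906557 : ℝ)/91589418) * fzP41 + ((-18488739922 : ℝ)/18272088891) * fzP50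
    have fzP40 : MvPolynomial.coeff (Finsupp.single 0 4 + Finsupp.single 1 0) P = 0 := by
      linear_combination pvP40 + ((47 : ℝ)/171) * fzP50
    have fzQ00 : MvPolynomial.coeff (Finsupp.single 0 0 + Finsupp.single 1 0) Q = 0 := by
      linear_combination pvQ00 + ((1 : ℝ)/2052) * fzQ50
    have fzQ01 : MvPolynomial.coeff (Finsupp.single 0 0 + Finsupp.single 1 1) Q = 0 := by
      linear_combination pvQ01 + ((23177 : ℝ)/137384127) * fzQ32 + ((-1236161 : ℝ)/824304762) * fzQ41 + ((-17850347 : ℝ)/36544177782) * fzQ50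
    have fzQ02 : MvPolynomial.coeff (Finsupp.single 0 0 + Finsupp.single 1 2) Q = 0 := by
      linear_combination pvQ02 + ((-10025357 : ℝ)/549536508) * fzQ32 + ((23157979 : ℝ)/1648609524) * fzQ41 + ((-81293815 : ℝ)/73088355564) * fzQ50
    have fzQ03 : MvPolynomial.coeff (Finsupp.single 0 0 + Finsupp.single 1 3) Q = 0 := by
      linear_combination pvQ03 + ((-202658 : ℝ)/137384127) * fzQ32 + ((11241617 : ℝ)/824304762) * fzQ41 + ((-16839080 : ℝ)/2610298413) * fzQ50
    have fzQ04 : MvPolynomial.coeff (Finsupp.single 0 0 + Finsupp.single 1 4) Q = 0 := by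
      linear_combination pvQ04 + ((9656117 : ℝ)/137384127) * fzQ32 + ((-20868844 : ℝ)/412152381) * fzQ41 + ((-10505953 : ℝ)/870099471) * fzQ50
    have fzQ05 : MvPolynomial.coeff (Finsupp.single 0 0 + Finsupp.single 1 5) Q = 0 := by
      linear_combination pvQ05 + ((-620840 : ℝ)/45794709) * fzQ32 + ((559828 : ℝ)/137384127) * fzQ41 + ((-126632728 : ℝ)/6090696297) * fzQ50
    have fzQ10 : MvPolynomial.coeff (Finsupp.single 0 1 + Finsupp.single 1 0) Q = 0 := by
      linear_combination pvQ10 + ((13 : ℝ)/2052) * fzQ50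
    have fzQ11 : MvPolynomial.coeff (Finsupp.single 0 1 + Finsupp.single 1 1) Q = 0 := by
      linear_combination pvQ11 + ((-12804827 : ℝ)/137384127) * fzQ32 + ((53833577 : ℝ)/824304762) * fzQ41 + ((-96906790 : ℝ)/6090696297) * fzQ50
    have fzQ12 : MvPolynomial.coeff (Finsupp.single 0 1 + Finsupp.single 1 2) Q = 0 := by
      linear_combination pvQ12 + ((-11310685 : ℝ)/183178836) * fzQ32 + ((66041783 : ℝ)/549536508) * fzQ41 + ((-1627075675 : ℝ)/10441193652) * fzQ50
    have fzQ13 : MvPolynomial.coeff (Finsupp.single 0 1 + Finsupp.single 1 3) Q = 0 := by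
      linear_combination pvQ13 + ((64292834 : ℝ)/137384127) * fzQ32 + ((-221454875 : ℝ)/824304762) * fzQ41 + ((-250814698 : ℝ)/2030232099) * fzQ50
    have fzQ14 : MvPolynomial.coeff (Finsupp.single 0 1 + Finsupp.single 1 4) Q = 0 := by
      linear_combination pvQ14 + ((1605349 : ℝ)/45794709) * fzQ32 + ((-7390778 : ℝ)/137384127) * fzQ41 + ((-58553485 : ℝ)/676744033) * fzQ50
    have fzQ20 : MvPolynomial.coeff (Finsupp.single 0 2 + Finsupp.single 1 0) Q = 0 := by
      linear_combination pvQ20 + ((-145 : ℝ)/2052) * fzQ50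
    have fzQ21 : MvPolynomial.coeff (Finsupp.single 0 2 + Finsupp.single 1 1) Q = 0 := by
      linear_combination pvQ21 + ((-12330094 : ℝ)/45794709) * fzQ32 + ((85455931 : ℝ)/274768254) * fzQ41 + ((-15375108565 : ℝ)/36544177782) * fzQ50
    have fzQ22 : MvPolynomial.coeff (Finsupp.single 0 2 + Finsupp.single 1 2) Q = 0 := by
      linear_combination pvQ22 + ((2519439 : ℝ)/5088301) * fzQ32 + ((1370809 : ℝ)/15264903) * fzQ41 + ((-12472995478 : ℝ)/18272088891) * fzQ50
    have fzQ23 : MvPolynomial.coeff (Finsupp.single 0 2 + Finsupp.single 1 3) Q = 0 := by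
      linear_combination pvQ23 + ((11662966 : ℝ)/15264903) * fzQ32 + ((-21513911 : ℝ)/45794709) * fzQ41 + ((8975380 : ℝ)/870099471) * fzQ50
    have fzQ30 : MvPolynomial.coeff (Finsupp.single 0 3 + Finsupp.single 1 0) Q = 0 := by
      linear_combination pvQ30 + ((-565 : ℝ)/2052) * fzQ50
    have fzQ31 : MvPolynomial.coeff (Finsupp.single 0 3 + Finsupp.single 1 1) Q = 0 := by
      linear_combination pvQ31 + ((-1876616 : ℝ)/15264903) * fzQ32 + ((69906557 : ℝ)/91589418) * fzQ41 + ((-18488739922 : ℝ)/18272088891) * fzQ50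
    have fzQ40 : MvPolynomial.coeff (Finsupp.single 0 4 + Finsupp.single 1 0) Q = 0 := by
      linear_combination pvQ40 + ((47 : ℝ)/171) * fzQ50
    constructor
    · apply eq_zero_of_coeffs P hP
      intro i j hi hj
      interval_cases i <;> interval_cases j <;>
        first
          | assumption
          | exact coeff_high P hP _ _ (by omega)
    · apply eq_zero_of_coeffs Q hQ
      intro i j hi hj
      interval_cases i <;> interval_cases j <;>
        first
          | assumption
          | exact coeff_high Q hQ _ _ (by omega)
  · refine ⟨Pb, Qb, Or.inl ?_, ?_, ?_⟩
    · intro h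
      exact Pb_not5 (by rw [h, MvPolynomial.totalDegree_zero]; omega)
    · have h1 : Pb.totalDegree = 6 := by
        have := Pb_not5
        have := Pb_deg
        omega
      have h2 := Qb_deg
      omega
    · intro L hL
      simp only [Ziegler2, Finset.mem_insert, Finset.mem_singleton] at hL
      rcases hL with rfl | rfl | rfl | rfl | rfl | rfl | rfl | rfl
      · exact inv1
      · exact inv2
      · exact inv3
      · exact inv4
      · exact inv5
      · exact inv6
      · exact inv7
      · exact inv8
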